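/- arXiv:cs/9907036 — 4 statements merged into one kernel-verified Lean document; each statement's English description precedes it below -/
import Mathlib

section
/- In the election constructed from a 3DM instance (M,W,X,Y) with ||M|| > 1 and q = ||W|| (with 2||M||-1 voters: one voter per triple of M placing s or t at bottom, then c, then the triple's three elements, then the other separator, then the rest; plus ||M||-1 voters placing c on top), the distinguished candidate c is preferred to each of s and t by strictly more than half of the voters, and c is preferred to every candidate in W ∪ X ∪ Y by exactly ||M||-1 of the 2||M||-1 voters. -/
/-- A voter's preference order is a list of candidates in *increasing* order of
preference (the head is the least preferred, the last element the most preferred).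
`prefers v x y` means voter `v` strictly prefers `x` to `y`. -/
def prefers {α : Type*} [DecidableEq α] (v : List α) (x y : α) : Prop :=
  v.idxOf y < v.idxOf x

/-- The number of voters in the profile `V` preferring `x` to `y`. -/
def numPrefer {α : Type*} [DecidableEq α] (V : List (List α)) (x y : α) : ℕ :=
  (V.filter (fun v => decide (v.idxOf y < v.idxOf x))).length

/-- `c` is a Condorcet winner: strictly more than half of the voters prefer `c`
to each other candidate. -/
def CondorcetWinner {α : Type*} [DecidableEq α] (C : Finset α) (V : List (List α))
    (c : α) : Prop :=
  c ∈ C ∧ ∀ d ∈ C, d ≠ c → V.length < 2 * numPrefer V c d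

/-- One switch in a single preference order: exchange two adjacent candidates. -/
def SwitchVoter {α : Type*} (v w : List α) : Prop :=
  ∃ (l r : List α) (x y : α), v = l ++ x :: y :: r ∧ w = l ++ y :: x :: r

/-- One switch in a profile: exchange two adjacent candidates in one voter's order. -/
def SwitchProfile {α : Type*} (V W : List (List α)) : Prop :=
  ∃ (P Q : List (List α)) (v w : List α),
    V = P ++ v :: Q ∧ W = P ++ w :: Q ∧ SwitchVoter v w

/-- `Reach R k a b`: `b` is reachable from `a` in exactly `k` `R`-steps. -/
def Reach {β : Type*} (R : β → β → Prop) : ℕ → β → β → Prop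
  | 0, a, b => a = b
  | k + 1, a, b => ∃ m, R a m ∧ Reach R k m b

/-- The Dodgson score of candidate `c`: the minimum number of switches needed to
make `c` a Condorcet winner. -/
noncomputable def DodgsonScore {α : Type*} [DecidableEq α] (C : Finset α)
    (V : List (List α)) (c : α) : ℕ :=
  sInf {k | ∃ W, Reach SwitchProfile k V W ∧ CondorcetWinner C W c}

/-- `v` is a valid preference order on the candidate set `C`. -/
def IsVoter {α : Type*} [DecidableEq α] (C : Finset α) (v : List α) : Prop :=
  v.Nodup ∧ ∀ x, x ∈ v ↔ x ∈ C

/-- Validity of a 3DM instance `(M, Ws, Xs, Ys)` with `||M|| > 1`, together with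
fresh, distinct candidates `c`, `s`, `t`. -/
def TDMOK {α : Type*} [DecidableEq α] (Ws Xs Ys : Finset α)
    (M : List (α × α × α)) (c s t : α) : Prop :=
  Ws.Nonempty ∧ Xs.Nonempty ∧ Ys.Nonempty ∧
  Disjoint Ws Xs ∧ Disjoint Ws Ys ∧ Disjoint Xs Ys ∧
  Ws.card = Xs.card ∧ Ws.card = Ys.card ∧
  (∀ m ∈ M, m.1 ∈ Ws ∧ m.2.1 ∈ Xs ∧ m.2.2 ∈ Ys) ∧
  M.Nodup ∧ 1 < M.length ∧
  c ∉ Ws ∪ Xs ∪ Ys ∧ s ∉ Ws ∪ Xs ∪ Ys ∧ t ∉ Ws ∪ Xs ∪ Ys ∧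
  c ≠ s ∧ c ≠ t ∧ s ≠ t

/-- The candidate set `W ∪ X ∪ Y ∪ {c, s, t}`. -/
def TDMCands {α : Type*} [DecidableEq α] (Ws Xs Ys : Finset α) (c s t : α) :
    Finset α :=
  Ws ∪ Xs ∪ Ys ∪ {c, s, t}

/-- The voter simulating a triple `(w, x, y)` of `M` (lists are in increasing
preference). If `odd` (1-based odd index) the order is
`⟨s < c < w < x < y < t < rest⟩`, otherwise `s` and `t` are exchanged; `R` lists
the remaining candidates in arbitrary order. -/
def IsTripleVoter {α : Type*} [DecidableEq α] (Cs : Finset α) (c s t w x y : α)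
    (odd : Bool) (v : List α) : Prop :=
  ∃ R : List α, R.Nodup ∧
    (∀ z, z ∈ R ↔ (z ∈ Cs ∧ z ∉ ({s, c, w, x, y, t} : Finset α))) ∧
    v = (if odd then [s, c, w, x, y, t] else [t, c, w, x, y, s]) ++ R

/-- A voter ranking `c` on top of all other candidates. -/
def IsTopVoter {α : Type*} [DecidableEq α] (Cs : Finset α) (c : α)
    (v : List α) : Prop :=
  ∃ R : List α, R.Nodup ∧ (∀ z, z ∈ R ↔ (z ∈ Cs ∧ z ≠ c)) ∧ v = R ++ [c]

/-- The election built from the 3DM instance: one voter per triple of `M`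
(`s` and `t` alternating with the parity of the 1-based index), followed by
`||M|| - 1` voters ranking `c` on top; `2||M|| - 1` voters in total. -/
def IsTDMElection {α : Type*} [DecidableEq α] (Ws Xs Ys : Finset α)
    (M : List (α × α × α)) (c s t : α) (V : List (List α)) : Prop :=
  ∃ V₁ V₂ : List (List α),
    V = V₁ ++ V₂ ∧
    V₂.length = M.length - 1 ∧
    (∃ h : V₁.length = M.length, ∀ i : Fin V₁.length,
      IsTripleVoter (TDMCands Ws Xs Ys c s t) c s t
        (M.get ⟨(i : ℕ), h ▸ i.isLt⟩).1
        (M.get ⟨(i : ℕ), h ▸ i.isLt⟩).2.1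
        (M.get ⟨(i : ℕ), h ▸ i.isLt⟩).2.2
        ((i : ℕ) % 2 == 0) (V₁.get i)) ∧
    (∀ v ∈ V₂, IsTopVoter (TDMCands Ws Xs Ys c s t) c v)

/-- `M` contains a matching: `q = ||Ws||` pairwise coordinate-disjoint triples. -/
def HasMatching {α : Type*} [DecidableEq α] (Ws : Finset α)
    (M : List (α × α × α)) : Prop :=
  ∃ M' : Finset (α × α × α), (∀ m ∈ M', m ∈ M) ∧ M'.card = Ws.card ∧
    ∀ m₁ ∈ M', ∀ m₂ ∈ M', m₁ ≠ m₂ →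
      m₁.1 ≠ m₂.1 ∧ m₁.2.1 ≠ m₂.2.1 ∧ m₁.2.2 ≠ m₂.2.2

private lemma indexOf_append_singleton_self {α : Type*} [DecidableEq α] {c : α} :
    ∀ {R : List α}, c ∉ R → (R ++ [c]).idxOf c = R.length := by
  intro R
  induction R with
  | nil => simp
  | cons a l ih =>
    intro h
    simp only [List.mem_cons, not_or] at h
    simp [List.idxOf_cons_ne _ (Ne.symm h.1), ih h.2]

/-- In the election from a 3DM instance with `||M|| > 1`, `c` is
preferred to each of `s` and `t` by strictly more than half of the voters, and
`c` is preferred to every candidate of `W ∪ X ∪ Y` by exactly `||M|| - 1` of the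
`2||M|| - 1` voters. -/
theorem tdm_election_counts {α : Type*} [DecidableEq α]
    (Ws Xs Ys : Finset α) (M : List (α × α × α)) (c s t : α)
    (V : List (List α))
    (hok : TDMOK Ws Xs Ys M c s t)
    (hel : IsTDMElection Ws Xs Ys M c s t V) :
    V.length = 2 * M.length - 1 ∧
    V.length < 2 * numPrefer V c s ∧
    V.length < 2 * numPrefer V c t ∧
    ∀ z ∈ Ws ∪ Xs ∪ Ys, numPrefer V c z = M.length - 1 := by
  obtain ⟨V₁, V₂, hV, hlen2, ⟨hlen1, htrip⟩, htop⟩ := hel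
  obtain ⟨hWne, hXne, hYne, hWX, hWY, hXY, hcard1, hcard2, hM, hMnd, hMlen,
    hc, hs, ht, hcs, hct, hst⟩ := hok
  -- membership helpers
  have hsC : s ∈ TDMCands Ws Xs Ys c s t := by
    simp [TDMCands, Finset.mem_union, Finset.mem_insert]
  have htC : t ∈ TDMCands Ws Xs Ys c s t := by
    simp [TDMCands, Finset.mem_union, Finset.mem_insert]
  have hzC : ∀ z ∈ Ws ∪ Xs ∪ Ys, z ∈ TDMCands Ws Xs Ys c s t := by
    intro z hz; simp only [TDMCands, Finset.mem_union] at hz ⊢; tauto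
  -- key per-voter facts
  have topPref : ∀ v ∈ V₂, ∀ z, z ∈ TDMCands Ws Xs Ys c s t → z ≠ c →
      v.idxOf z < v.idxOf c := by
    intro v hv z hzm hzc
    obtain ⟨R, hRnd, hRiff, hveq⟩ := htop v hv
    have hzR : z ∈ R := (hRiff z).mpr ⟨hzm, hzc⟩
    have hcR : c ∉ R := fun h => ((hRiff c).mp h).2 rfl
    have h1 : v.idxOf z = R.idxOf z := by
      rw [hveq]; exact List.idxOf_append_of_mem hzR
    have h2 : v.idxOf c = R.length := by
      rw [hveq]; exact indexOf_append_singleton_self hcR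
    rw [h1, h2]
    exact List.idxOf_lt_length_iff.mpr hzR
  have tripIdxC : ∀ i : Fin V₁.length,
      (V₁.get i).idxOf c = 1 ∧
      (∀ z, z ≠ s → z ≠ t → 1 ≤ (V₁.get i).idxOf z) := by
    intro i
    obtain ⟨R, hRnd, hRiff, hveq⟩ := htrip i
    cases h : ((i : ℕ) % 2 == 0) <;> rw [h] at hveq <;> simp only [if_true, if_false,
      Bool.false_eq_true, Bool.true_eq_false, if_neg, ite_true, ite_false] at hveq
    · constructor
      · rw [hveq]
        simp only [List.cons_append]
        rw [List.idxOf_cons_ne _ (Ne.symm hct), List.idxOf_cons_self]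
      · intro z hzs hzt
        rw [hveq]
        simp only [List.cons_append]
        rw [List.idxOf_cons_ne _ (Ne.symm hzt)]
        omega
    · constructor
      · rw [hveq]
        simp only [List.cons_append]
        rw [List.idxOf_cons_ne _ (Ne.symm hcs), List.idxOf_cons_self]
      · intro z hzs hzt
        rw [hveq]
        simp only [List.cons_append]
        rw [List.idxOf_cons_ne _ (Ne.symm hzs)]
        omega
  -- lengths
  have hVlen : V.length = V₁.length + V₂.length := by rw [hV, List.length_append]
  have hlen : V.length = 2 * M.length - 1 := by rw [hVlen, hlen1, hlen2]; omega
  -- split numPrefer over append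
  have hsplit : ∀ d, numPrefer V c d = numPrefer V₁ c d + numPrefer V₂ c d := by
    intro d; simp [numPrefer, hV, List.filter_append]
  -- top voters all count
  have htopCount : ∀ z, z ∈ TDMCands Ws Xs Ys c s t → z ≠ c →
      numPrefer V₂ c z = V₂.length := by
    intro z hzm hzc
    unfold numPrefer
    rw [List.filter_eq_self.mpr]
    intro v hv
    exact decide_eq_true (topPref v hv z hzm hzc)
  -- triple voters never prefer c to z ∈ Ws ∪ Xs ∪ Ys
  have htripZero : ∀ z ∈ Ws ∪ Xs ∪ Ys, numPrefer V₁ c z = 0 := by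
    intro z hz
    have hzs : z ≠ s := fun h => hs (h ▸ hz)
    have hzt : z ≠ t := fun h => ht (h ▸ hz)
    unfold numPrefer
    rw [List.length_eq_zero_iff, List.filter_eq_nil_iff]
    intro v hv
    obtain ⟨i, hi⟩ := List.mem_iff_get.mp hv
    subst hi
    obtain ⟨h1, h2⟩ := tripIdxC i
    have h3 := h2 z hzs hzt
    simp only [decide_eq_true_eq, not_lt, h1]
    exact h3
  -- a voter at index i with p true forces count ≥ 1
  have hge1 : ∀ d, ∀ i : Fin V₁.length,
      (V₁.get i).idxOf d < (V₁.get i).idxOf c → 1 ≤ numPrefer V₁ c d := by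
    intro d i hp
    have hmem : V₁.get i ∈ V₁.filter (fun v => decide (v.idxOf d < v.idxOf c)) :=
      List.mem_filter.mpr ⟨List.get_mem _ _, decide_eq_true hp⟩
    have := List.length_pos_iff.mpr (List.ne_nil_of_mem hmem)
    exact this
  have h0lt : 0 < V₁.length := by rw [hlen1]; omega
  have h1lt : 1 < V₁.length := by rw [hlen1]; omega
  -- voter 0 prefers c to s
  have hs1 : 1 ≤ numPrefer V₁ c s := by
    apply hge1 s ⟨0, h0lt⟩
    obtain ⟨R, hRnd, hRiff, hveq⟩ := htrip ⟨0, h0lt⟩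
    norm_num at hveq
    simp only [List.get_eq_getElem, Fin.val_mk]
    rw [hveq]
    simp only [List.cons_append, List.idxOf_cons_self]
    rw [List.idxOf_cons_ne _ (Ne.symm hcs), List.idxOf_cons_self]
    omega
  -- voter 1 prefers c to t
  have ht1 : 1 ≤ numPrefer V₁ c t := by
    apply hge1 t ⟨1, h1lt⟩
    obtain ⟨R, hRnd, hRiff, hveq⟩ := htrip ⟨1, h1lt⟩
    norm_num at hveq
    simp only [List.get_eq_getElem, Fin.val_mk]
    rw [hveq]
    simp only [List.cons_append, List.idxOf_cons_self]
    rw [List.idxOf_cons_ne _ (Ne.symm hct), List.idxOf_cons_self]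
    omega
  have hnps : numPrefer V₂ c s = V₂.length := htopCount s hsC (Ne.symm hcs)
  have hnpt : numPrefer V₂ c t = V₂.length := htopCount t htC (Ne.symm hct)
  refine ⟨hlen, ?_, ?_, ?_⟩
  · rw [hsplit s, hnps]; omega
  · rw [hsplit t, hnpt]; omega
  · intro z hz
    have hzc : z ≠ c := fun h => hc (h ▸ hz)
    rw [hsplit z, htripZero z hz, htopCount z (hzC z hz) hzc, hlen2]
    omega
end

section
/- In the election constructed from a 3DM instance (M,W,X,Y) with ||M|| > 1 and q = ||W||, if M contains a matching (a subset M' ⊆ M of size q whose triples are pairwise disjoint in every coordinate), then the Dodgson score of the distinguished candidate c is exactly 3q. -/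
section DodgsonAux

variable {α : Type*} [DecidableEq α]

lemma idx_cons (a b : α) (l : List α) :
    List.idxOf a (b :: l) = if a = b then 0 else List.idxOf a l + 1 := by
  simp [List.idxOf_cons, Bool.cond_eq_ite, beq_iff_eq]
  by_cases h : a = b <;> simp [h, eq_comm]

lemma idx_append_not_mem {a : α} {l : List α} (h : a ∉ l) (r : List α) :
    List.idxOf a (l ++ r) = l.length + List.idxOf a r := by
  induction l with
  | nil => simp
  | cons b l ih =>
    simp only [List.mem_cons, not_or] at h
    simp [idx_cons, h.1, ih h.2]
    omega

lemma idx_append_mem {a : α} {l : List α} (h : a ∈ l) (r : List α) :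
    List.idxOf a (l ++ r) = List.idxOf a l := by
  induction l with
  | nil => simp at h
  | cons b l ih =>
    rcases List.mem_cons.1 h with h1 | h1
    · simp [idx_cons, h1]
    · by_cases hb : a = b <;> simp [idx_cons, hb, ih h1]

lemma flip_lemma (l r : List α) (x y a b : α)
    (h : ¬((a = x ∧ b = y) ∨ (a = y ∧ b = x))) :
    (List.idxOf b (l ++ x :: y :: r) < List.idxOf a (l ++ x :: y :: r) ↔
     List.idxOf b (l ++ y :: x :: r) < List.idxOf a (l ++ y :: x :: r)) := by
  induction l with
  | cons e l ih =>
    by_cases ha : a = e <;> by_cases hb : b = e <;>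
      simp [idx_cons, ha, hb, ih]
  | nil =>
    by_cases hax : a = x <;> by_cases hay : a = y <;>
    by_cases hbx : b = x <;> by_cases hby : b = y <;>
      simp_all [idx_cons]

lemma numPrefer_append (A B : List (List α)) (x y : α) :
    numPrefer (A ++ B) x y = numPrefer A x y + numPrefer B x y := by
  simp [numPrefer, List.filter_append]

lemma numPrefer_cons (v : List α) (B : List (List α)) (x y : α) :
    numPrefer (v :: B) x y =
      (if v.idxOf y < v.idxOf x then 1 else 0) + numPrefer B x y := by
  by_cases h : v.idxOf y < v.idxOf x <;>
    simp [numPrefer, List.filter_cons, h, Nat.add_comm]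

lemma numPrefer_all {V : List (List α)} {x y : α}
    (h : ∀ v ∈ V, v.idxOf y < v.idxOf x) : numPrefer V x y = V.length := by
  unfold numPrefer
  rw [List.filter_eq_self.2 (by simpa using h)]

lemma numPrefer_eq_zero {V : List (List α)} {x y : α}
    (h : ∀ v ∈ V, ¬ v.idxOf y < v.idxOf x) : numPrefer V x y = 0 := by
  unfold numPrefer
  rw [List.filter_eq_nil_iff.2 (by simpa using h)]; rfl

lemma one_le_numPrefer {V : List (List α)} {v : List α} {x y : α}
    (hv : v ∈ V) (h : v.idxOf y < v.idxOf x) : 1 ≤ numPrefer V x y := by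
  have hmem : v ∈ V.filter (fun v => decide (v.idxOf y < v.idxOf x)) :=
    List.mem_filter.2 ⟨hv, by simpa using h⟩
  have := List.length_pos_iff.2 (List.ne_nil_of_mem hmem)
  exact this

lemma switch_numPrefer {V W : List (List α)} (h : SwitchProfile V W) (c : α) :
    ∃ d₀ : α, (∀ d, d ≠ d₀ → numPrefer W c d = numPrefer V c d) ∧
      (∀ d, numPrefer W c d ≤ numPrefer V c d + 1) := by
  obtain ⟨P, Q, v, w, hV, hW, l, r, x, y, hv, hw⟩ := h
  subst hV hW hv hw
  refine ⟨if c = x then y else if c = y then x else c, fun d hd => ?_, fun d => ?_⟩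
  · have hflip : ¬((c = x ∧ d = y) ∨ (c = y ∧ d = x)) := by
      by_cases h1 : c = x <;> by_cases h2 : c = y <;> simp_all
    have := flip_lemma l r x y c d hflip
    simp only [numPrefer_append, numPrefer_cons]
    rw [if_congr this.symm rfl rfl]
  · simp only [numPrefer_append, numPrefer_cons]
    have h1 : (if List.idxOf d (l ++ y :: x :: r) < List.idxOf c (l ++ y :: x :: r)
        then 1 else 0) ≤ 1 := by split <;> omega
    omega

lemma switch_length {V W : List (List α)} (h : SwitchProfile V W) :
    W.length = V.length := by
  obtain ⟨P, Q, v, w, hV, hW, _⟩ := h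
  subst hV hW; simp

noncomputable def pot (D : Finset α) (n : ℕ) (c : α) (P : List (List α)) : ℕ :=
  ∑ d ∈ D, (n - numPrefer P c d)

lemma pot_switch {V W : List (List α)} (h : SwitchProfile V W)
    (D : Finset α) (n : ℕ) (c : α) : pot D n c V ≤ pot D n c W + 1 := by
  obtain ⟨d₀, heq, hle⟩ := switch_numPrefer h c
  by_cases hd : d₀ ∈ D
  · rw [pot, pot, ← Finset.add_sum_erase _ _ hd, ← Finset.add_sum_erase _ _ hd]
    have h1 : ∑ d ∈ D.erase d₀, (n - numPrefer V c d)
        = ∑ d ∈ D.erase d₀, (n - numPrefer W c d) := by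
      refine Finset.sum_congr rfl fun d hdd => ?_
      rw [heq d (Finset.ne_of_mem_erase hdd)]
    have h2 := hle d₀
    omega
  · rw [pot, pot]
    have h1 : ∑ d ∈ D, (n - numPrefer V c d) = ∑ d ∈ D, (n - numPrefer W c d) := by
      refine Finset.sum_congr rfl fun d hdd => ?_
      rw [heq d (fun hh => hd (hh ▸ hdd))]
    omega

lemma reach_pot {k : ℕ} {V W : List (List α)} (h : Reach SwitchProfile k V W)
    (D : Finset α) (n : ℕ) (c : α) : pot D n c V ≤ pot D n c W + k := by
  induction k generalizing V with
  | zero => cases h; omega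
  | succ k ih =>
    obtain ⟨m, h1, h2⟩ := h
    have := pot_switch h1 D n c
    have := ih h2
    omega

lemma reach_length {k : ℕ} {V W : List (List α)} (h : Reach SwitchProfile k V W) :
    W.length = V.length := by
  induction k generalizing V with
  | zero => cases h; rfl
  | succ k ih => obtain ⟨m, h1, h2⟩ := h; rw [ih h2, switch_length h1]

lemma reach_trans {β : Type*} {R : β → β → Prop} {k m : ℕ} {a b c : β}
    (h1 : Reach R k a b) (h2 : Reach R m b c) : Reach R (k + m) a c := by
  induction k generalizing a with
  | zero => cases h1; simpa using h2
  | succ k ih =>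
    obtain ⟨d, hd, hr⟩ := h1
    rw [Nat.succ_add]
    exact ⟨d, hd, ih hr⟩

lemma reach_lift {β : Type*} {R : β → β → Prop} {γ : Type*} {T : γ → γ → Prop}
    (f : β → γ) (hf : ∀ a b, R a b → T (f a) (f b)) {k : ℕ} {a b : β}
    (h : Reach R k a b) : Reach T k (f a) (f b) := by
  induction k generalizing a with
  | zero => cases h; rfl
  | succ k ih => obtain ⟨m, h1, h2⟩ := h; exact ⟨f m, hf _ _ h1, ih h2⟩

lemma switch_cons_head {v w : List α} (Q : List (List α)) (h : SwitchVoter v w) :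
    SwitchProfile (v :: Q) (w :: Q) := ⟨[], Q, v, w, rfl, rfl, h⟩

lemma switch_cons_tail {L L' : List (List α)} (v : List α) (h : SwitchProfile L L') :
    SwitchProfile (v :: L) (v :: L') := by
  obtain ⟨P, Q, a, b, h1, h2, h3⟩ := h
  exact ⟨v :: P, Q, a, b, by simp [h1], by simp [h2], h3⟩

lemma switch_append_right {L L' : List (List α)} (B : List (List α))
    (h : SwitchProfile L L') : SwitchProfile (L ++ B) (L' ++ B) := by
  obtain ⟨P, Q, a, b, h1, h2, h3⟩ := h
  exact ⟨P, Q ++ B, a, b, by simp [h1], by simp [h2], h3⟩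

lemma reach_cons {k m : ℕ} {v w : List α} {L L' : List (List α)}
    (h1 : Reach SwitchVoter k v w) (h2 : Reach SwitchProfile m L L') :
    Reach SwitchProfile (k + m) (v :: L) (w :: L') := by
  refine reach_trans (b := w :: L) ?_ ?_
  · exact reach_lift (fun u => u :: L) (fun a b h => switch_cons_head L h) h1
  · exact reach_lift (fun U => w :: U) (fun a b h => switch_cons_tail w h) h2

lemma reach_map {ι : Type*} (L : List ι) (f g : ι → List α) (K : ι → ℕ)
    (h : ∀ i ∈ L, Reach SwitchVoter (K i) (f i) (g i)) :
    Reach SwitchProfile ((L.map K).sum) (L.map f) (L.map g) := by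
  induction L with
  | nil => rfl
  | cons i L ih =>
    simpa using reach_cons (h i (by simp)) (ih fun j hj => h j (by simp [hj]))

lemma reach3 (a b w x y cc : α) (R : List α) :
    Reach SwitchVoter 3 (a :: cc :: w :: x :: y :: b :: R)
      (a :: w :: x :: y :: cc :: b :: R) := by
  refine ⟨a :: w :: cc :: x :: y :: b :: R, ⟨[a], _, cc, w, rfl, rfl⟩,
    a :: w :: x :: cc :: y :: b :: R, ⟨[a, w], _, cc, x, rfl, rfl⟩,
    a :: w :: x :: y :: cc :: b :: R, ⟨[a, w, x], _, cc, y, rfl, rfl⟩, rfl⟩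

lemma sum_ite3 {ι : Type*} (p : ι → Prop) [DecidablePred p] (L : List ι) :
    (L.map fun i => if p i then 3 else 0).sum = 3 * L.countP (fun i => decide (p i)) := by
  induction L with
  | nil => simp
  | cons a L ih =>
    by_cases h : p a <;> simp [List.countP_cons, h, ih] <;> omega

lemma pref_block (a b w x y c d : α) (R : List α)
    (hca : c ≠ a) (hcw : c ≠ w) (hcx : c ≠ x) (hcy : c ≠ y) (hda : d ≠ a)
    (hd : d = w ∨ (d ≠ w ∧ d = x) ∨ (d ≠ w ∧ d ≠ x ∧ d = y)) :
    List.idxOf d (a :: w :: x :: y :: c :: b :: R) <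
      List.idxOf c (a :: w :: x :: y :: c :: b :: R) := by
  have hc4 : List.idxOf c (a :: w :: x :: y :: c :: b :: R) = 4 := by
    simp [idx_cons, hca, hcw, hcx, hcy]
  rw [hc4]
  rcases hd with h | ⟨h1, h2⟩ | ⟨h1, h2, h3⟩
  · subst h; simp [idx_cons, hda]
  · subst h2; simp [idx_cons, hda, h1]
  · subst h3; simp [idx_cons, hda, h1, h2]

lemma pref_head (c s : α) (hcs : c ≠ s) (L : List α) :
    List.idxOf s (s :: L) < List.idxOf c (s :: L) := by
  simp [idx_cons, hcs]

end DodgsonAux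

/-- In the election from a 3DM instance with `||M|| > 1` and
`q = ||W||`, if `M` contains a matching then the Dodgson score of the
distinguished candidate `c` is exactly `3q`. -/
theorem tdm_matching_score {α : Type*} [DecidableEq α]
    (Ws Xs Ys : Finset α) (M : List (α × α × α)) (c s t : α)
    (V : List (List α))
    (hok : TDMOK Ws Xs Ys M c s t)
    (hel : IsTDMElection Ws Xs Ys M c s t V)
    (hmatch : HasMatching Ws M) :
    DodgsonScore (TDMCands Ws Xs Ys c s t) V c = 3 * Ws.card := by
  classical
  obtain ⟨hWne, hXne, hYne, hWX, hWY, hXY, hcX, hcYq, hMc, hMnd, hMlen,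
    hcUn, hsUn, htUn, hcs, hct, hst⟩ := hok
  obtain ⟨V₁, V₂, hV, hV2len, ⟨h1, htrip⟩, htop⟩ := hel
  obtain ⟨M', hM'sub, hM'card, hM'disj⟩ := hmatch
  have hCsmem : ∀ z, z ∈ TDMCands Ws Xs Ys c s t ↔
      (z ∈ Ws ∨ z ∈ Xs ∨ z ∈ Ys ∨ z = c ∨ z = s ∨ z = t) := by
    intro z
    simp only [TDMCands, Finset.mem_union, Finset.mem_insert, Finset.mem_singleton]
    tauto
  have hcC : c ∈ TDMCands Ws Xs Ys c s t := (hCsmem c).2 (by tauto)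
  have hUmem : ∀ {z}, (z ∈ Ws ∨ z ∈ Xs ∨ z ∈ Ys) → z ∈ Ws ∪ Xs ∪ Ys := by
    intro z hz
    simp only [Finset.mem_union]
    tauto
  have hUc : ∀ {z}, (z ∈ Ws ∨ z ∈ Xs ∨ z ∈ Ys) → z ≠ c :=
    fun hz he => hcUn (he ▸ hUmem hz)
  have hUs : ∀ {z}, (z ∈ Ws ∨ z ∈ Xs ∨ z ∈ Ys) → z ≠ s :=
    fun hz he => hsUn (he ▸ hUmem hz)
  have hUt : ∀ {z}, (z ∈ Ws ∨ z ∈ Xs ∨ z ∈ Ys) → z ≠ t :=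
    fun hz he => htUn (he ▸ hUmem hz)
  -- all top voters rank c above every other candidate
  have htop' : ∀ d, d ∈ TDMCands Ws Xs Ys c s t → d ≠ c →
      numPrefer V₂ c d = V₂.length := by
    intro d hd hdc
    refine numPrefer_all fun v hv => ?_
    obtain ⟨Rv, hnd, hspec, hveq⟩ := htop v hv
    subst hveq
    have hcR : c ∉ Rv := fun h => ((hspec c).1 h).2 rfl
    have hdR : d ∈ Rv := (hspec d).2 ⟨hd, hdc⟩
    rw [idx_append_mem hdR, idx_append_not_mem hcR]
    have hlt := List.idxOf_lt_length_iff.2 hdR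
    have h0 : List.idxOf c [c] = 0 := List.idxOf_cons_self
    omega
  -- abstract the triple function
  obtain ⟨trip, htripdef, hTV⟩ : ∃ trip : Fin V₁.length → α × α × α,
      (∀ i : Fin V₁.length, trip i = M.get ⟨(i : ℕ), h1 ▸ i.isLt⟩) ∧
      (∀ i : Fin V₁.length, ∃ Rl : List α,
        V₁.get i = (if ((i : ℕ) % 2 == 0) then
            [s, c, (trip i).1, (trip i).2.1, (trip i).2.2, t]
          else [t, c, (trip i).1, (trip i).2.1, (trip i).2.2, s]) ++ Rl) := by
    refine ⟨fun i => M.get ⟨(i : ℕ), h1 ▸ i.isLt⟩, fun i => rfl, fun i => ?_⟩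
    obtain ⟨Rl, -, -, hveq⟩ := htrip i
    exact ⟨Rl, hveq⟩
  choose R hR using hTV
  have htripmem : ∀ i, trip i ∈ M := by
    intro i
    rw [htripdef i]
    exact List.get_mem _ _
  have htripWXY : ∀ i, (trip i).1 ∈ Ws ∧ (trip i).2.1 ∈ Xs ∧ (trip i).2.2 ∈ Ys :=
    fun i => hMc (trip i) (htripmem i)
  have hMeq : M = (List.finRange V₁.length).map trip := by
    refine List.ext_getElem (by simp [h1]) fun i hi1 hi2 => ?_
    simp only [List.getElem_map, List.getElem_finRange, htripdef]
    simp [List.get_eq_getElem]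
  have hcount : ((List.finRange V₁.length).countP fun i => decide (trip i ∈ M')) = Ws.card := by
    have e1 : M.countP (fun m => decide (m ∈ M'))
        = ((List.finRange V₁.length).countP fun i => decide (trip i ∈ M')) := by
      conv_lhs => rw [hMeq]
      rw [List.countP_map]
      rfl
    rw [← e1, List.countP_eq_length_filter]
    have hnd2 : (M.filter fun m => decide (m ∈ M')).Nodup := hMnd.filter _
    have hfin : (M.filter fun m => decide (m ∈ M')).toFinset = M' := by
      ext m
      simp only [List.mem_toFinset, List.mem_filter, decide_eq_true_eq]
      exact ⟨fun h => h.2, fun h => ⟨hM'sub m h, h⟩⟩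
    rw [← List.toFinset_card_of_nodup hnd2, hfin, hM'card]
  -- the modified profile
  obtain ⟨G, hGdef⟩ : ∃ G : Fin V₁.length → List α, ∀ i, G i =
      if trip i ∈ M' then
        (if ((i : ℕ) % 2 == 0) then
            [s, (trip i).1, (trip i).2.1, (trip i).2.2, c, t]
          else [t, (trip i).1, (trip i).2.1, (trip i).2.2, c, s]) ++ R i
      else V₁.get i := ⟨_, fun i => rfl⟩
  obtain ⟨V₁', hV₁'def⟩ : ∃ L : List (List α), L = (List.finRange V₁.length).map G :=
    ⟨_, rfl⟩
  have hV₁eq : V₁ = (List.finRange V₁.length).map fun i => V₁.get i :=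
    List.ext_getElem (by simp) fun i hi1 hi2 => by simp [List.get_eq_getElem]
  have hreach1 : Reach SwitchProfile (3 * Ws.card) V₁ V₁' := by
    have hstep : ∀ i ∈ List.finRange V₁.length,
        Reach SwitchVoter (if trip i ∈ M' then 3 else 0) (V₁.get i) (G i) := by
      intro i _
      by_cases hm : trip i ∈ M'
      · rw [if_pos hm, hGdef i, if_pos hm, hR i]
        cases hb : ((i : ℕ) % 2 == 0) <;> simp only [hb, if_true, if_false,
          Bool.false_eq_true, Bool.true_eq_false, ite_true, ite_false]
        · exact reach3 t s _ _ _ c (R i)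
        · exact reach3 s t _ _ _ c (R i)
      · rw [if_neg hm, hGdef i, if_neg hm]
        rfl
    have hmain := reach_map (List.finRange V₁.length) (fun i => V₁.get i) G
      (fun i => if trip i ∈ M' then 3 else 0) hstep
    rw [← hV₁eq, ← hV₁'def] at hmain
    have hsum : ((List.finRange V₁.length).map fun i =>
        if trip i ∈ M' then 3 else 0).sum = 3 * Ws.card := by
      rw [sum_ite3, hcount]
    rwa [hsum] at hmain
  have hreachV : Reach SwitchProfile (3 * Ws.card) V (V₁' ++ V₂) := by
    rw [hV]
    exact reach_lift (fun L => L ++ V₂) (fun a b h => switch_append_right V₂ h) hreach1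
  have hV₁'len : V₁'.length = V₁.length := by simp [hV₁'def]
  have hn2 : 2 ≤ M.length := hMlen
  have hG_mem : ∀ i : Fin V₁.length, G i ∈ V₁' := by
    intro i
    rw [hV₁'def]
    exact List.mem_map.2 ⟨i, List.mem_finRange i, rfl⟩
  -- witnesses in the modified half for candidates of W ∪ X ∪ Y
  have hwitness : ∀ d, (d ∈ Ws ∨ d ∈ Xs ∨ d ∈ Ys) → 1 ≤ numPrefer V₁' c d := by
    intro d hd
    have himg : ∀ (f : α × α × α → α) (S : Finset α), (∀ m ∈ M', f m ∈ S) →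
        (∀ m₁ ∈ M', ∀ m₂ ∈ M', m₁ ≠ m₂ → f m₁ ≠ f m₂) → S.card = Ws.card →
        ∀ e ∈ S, ∃ m ∈ M', f m = e := by
      intro f S hsub hinj hcard e he
      have h1' : M'.image f ⊆ S := Finset.image_subset_iff.2 hsub
      have h2' : (M'.image f).card = M'.card :=
        Finset.card_image_of_injOn fun m₁ hm₁ m₂ hm₂ hfe => by
          by_contra hne
          exact hinj m₁ hm₁ m₂ hm₂ hne hfe
      have h3' : M'.image f = S :=
        Finset.eq_of_subset_of_card_le h1' (by rw [h2', hM'card, hcard])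
      rw [← h3'] at he
      obtain ⟨m, hm, hfm⟩ := Finset.mem_image.1 he
      exact ⟨m, hm, hfm⟩
    have hWXd := Finset.disjoint_left.1 hWX
    have hWYd := Finset.disjoint_left.1 hWY
    have hXYd := Finset.disjoint_left.1 hXY
    have hex : ∃ m ∈ M', d = m.1 ∨ (d ≠ m.1 ∧ d = m.2.1) ∨
        (d ≠ m.1 ∧ d ≠ m.2.1 ∧ d = m.2.2) := by
      rcases hd with h | h | h
      · obtain ⟨m, hm, he⟩ := himg Prod.fst Ws (fun m hm => (hMc m (hM'sub m hm)).1)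
          (fun m₁ h₁ m₂ h₂ hne => (hM'disj m₁ h₁ m₂ h₂ hne).1) rfl d h
        exact ⟨m, hm, Or.inl he.symm⟩
      · obtain ⟨m, hm, he⟩ := himg (fun m => m.2.1) Xs
          (fun m hm => (hMc m (hM'sub m hm)).2.1)
          (fun m₁ h₁ m₂ h₂ hne => (hM'disj m₁ h₁ m₂ h₂ hne).2.1) hcX.symm d h
        have hw : m.1 ∈ Ws := (hMc m (hM'sub m hm)).1
        exact ⟨m, hm, Or.inr (Or.inl ⟨fun hh => hWXd (hh ▸ hw) h, he.symm⟩)⟩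
      · obtain ⟨m, hm, he⟩ := himg (fun m => m.2.2) Ys
          (fun m hm => (hMc m (hM'sub m hm)).2.2)
          (fun m₁ h₁ m₂ h₂ hne => (hM'disj m₁ h₁ m₂ h₂ hne).2.2) hcYq.symm d h
        have hw : m.1 ∈ Ws := (hMc m (hM'sub m hm)).1
        have hx : m.2.1 ∈ Xs := (hMc m (hM'sub m hm)).2.1
        exact ⟨m, hm, Or.inr (Or.inr ⟨fun hh => hWYd (hh ▸ hw) h,
          fun hh => hXYd (hh ▸ hx) h, he.symm⟩)⟩
    obtain ⟨m, hm, hdm⟩ := hex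
    obtain ⟨i, hi⟩ : ∃ i : Fin V₁.length, trip i = m := by
      have : m ∈ (List.finRange V₁.length).map trip := hMeq ▸ hM'sub m hm
      obtain ⟨i, -, hi⟩ := List.mem_map.1 this
      exact ⟨i, hi⟩
    subst hi
    refine one_le_numPrefer (hG_mem i) ?_
    rw [hGdef i, if_pos hm]
    have hcw : c ≠ (trip i).1 := (hUc (Or.inl (htripWXY i).1)).symm
    have hcx : c ≠ (trip i).2.1 := (hUc (Or.inr (Or.inl (htripWXY i).2.1))).symm
    have hcy : c ≠ (trip i).2.2 := (hUc (Or.inr (Or.inr (htripWXY i).2.2))).symm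
    cases hb : ((i : ℕ) % 2 == 0) <;> simp only [hb, Bool.false_eq_true,
      Bool.true_eq_false, ite_true, ite_false, List.cons_append, List.nil_append]
    · exact pref_block t s _ _ _ c d (R i) hct hcw hcx hcy (hUt hd) hdm
    · exact pref_block s t _ _ _ c d (R i) hcs hcw hcx hcy (hUs hd) hdm
  -- witness for s
  have hlen1 : 0 < V₁.length := by omega
  have hwit_s : 1 ≤ numPrefer V₁' c s := by
    refine one_le_numPrefer (hG_mem ⟨0, hlen1⟩) ?_
    have hb : (((⟨0, hlen1⟩ : Fin V₁.length) : ℕ) % 2 == 0) = true := rfl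
    rw [hGdef ⟨0, hlen1⟩]
    by_cases hm : trip ⟨0, hlen1⟩ ∈ M'
    · rw [if_pos hm, hb, if_pos rfl]
      exact pref_head c s hcs _
    · rw [if_neg hm, hR ⟨0, hlen1⟩, hb, if_pos rfl]
      exact pref_head c s hcs _
  have hlen2 : 1 < V₁.length := by omega
  have hwit_t : 1 ≤ numPrefer V₁' c t := by
    refine one_le_numPrefer (hG_mem ⟨1, hlen2⟩) ?_
    have hb : (((⟨1, hlen2⟩ : Fin V₁.length) : ℕ) % 2 == 0) = false := rfl
    rw [hGdef ⟨1, hlen2⟩]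
    by_cases hm : trip ⟨1, hlen2⟩ ∈ M'
    · rw [if_pos hm, hb, if_neg (by simp)]
      exact pref_head c t hct _
    · rw [if_neg hm, hR ⟨1, hlen2⟩, hb, if_neg (by simp)]
      exact pref_head c t hct _
  -- the Condorcet winner
  have hCW : CondorcetWinner (TDMCands Ws Xs Ys c s t) (V₁' ++ V₂) c := by
    refine ⟨hcC, fun d hd hdc => ?_⟩
    have hd2 := htop' d hd hdc
    have h1d : 1 ≤ numPrefer V₁' c d := by
      rcases (hCsmem d).1 hd with h | h | h | h | h | h
      · exact hwitness d (Or.inl h)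
      · exact hwitness d (Or.inr (Or.inl h))
      · exact hwitness d (Or.inr (Or.inr h))
      · exact absurd h hdc
      · subst h; exact hwit_s
      · subst h; exact hwit_t
    rw [numPrefer_append, hd2, List.length_append, hV₁'len, h1, hV2len]
    omega
  have hmem3q : (3 * Ws.card) ∈
      {k | ∃ Wp, Reach SwitchProfile k V Wp ∧
        CondorcetWinner (TDMCands Ws Xs Ys c s t) Wp c} :=
    ⟨V₁' ++ V₂, hreachV, hCW⟩
  -- lower bound
  have hDmem : ∀ z, z ∈ Ws ∪ Xs ∪ Ys ↔ (z ∈ Ws ∨ z ∈ Xs ∨ z ∈ Ys) := by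
    intro z
    simp [Finset.mem_union, or_assoc]
  have hDsub : ∀ d ∈ Ws ∪ Xs ∪ Ys, d ∈ TDMCands Ws Xs Ys c s t := by
    intro d hd
    rcases (hDmem d).1 hd with h | h | h <;> exact (hCsmem d).2 (by tauto)
  have hcardD : (Ws ∪ Xs ∪ Ys).card = 3 * Ws.card := by
    have hdisj1 : Disjoint (Ws ∪ Xs) Ys := Finset.disjoint_union_left.2 ⟨hWY, hXY⟩
    rw [Finset.card_union_of_disjoint hdisj1, Finset.card_union_of_disjoint hWX,
      ← hcX, ← hcYq]
    ring
  have hprefV : ∀ d ∈ Ws ∪ Xs ∪ Ys, numPrefer V c d = M.length - 1 := by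
    intro d hd
    have hd3 := (hDmem d).1 hd
    rw [hV, numPrefer_append]
    have hz : numPrefer V₁ c d = 0 := by
      refine numPrefer_eq_zero fun v hv => ?_
      obtain ⟨i, hget⟩ := List.mem_iff_get.1 hv
      rw [← hget, hR i]
      cases hb : ((i : ℕ) % 2 == 0) <;>
        simp [hb, idx_cons, hUs hd3, hUt hd3, hUc hd3, hcs, hct]
    rw [hz, htop' d (hDsub d hd) (hUc hd3), hV2len]
    omega
  have hpotV : pot (Ws ∪ Xs ∪ Ys) M.length c V = 3 * Ws.card := by
    have hterm : ∀ d ∈ Ws ∪ Xs ∪ Ys, M.length - numPrefer V c d = 1 := by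
      intro d hd
      rw [hprefV d hd]
      omega
    rw [pot, Finset.sum_congr rfl hterm, Finset.sum_const, hcardD, smul_eq_mul, mul_one]
  have hlow : ∀ k ∈ {k | ∃ Wp, Reach SwitchProfile k V Wp ∧
      CondorcetWinner (TDMCands Ws Xs Ys c s t) Wp c}, 3 * Ws.card ≤ k := by
    rintro k ⟨Wp, hre, hcwin⟩
    have hWlen : Wp.length = V.length := reach_length hre
    have hVlen : V.length = M.length + (M.length - 1) := by
      rw [hV, List.length_append, h1, hV2len]
    have hpotW : pot (Ws ∪ Xs ∪ Ys) M.length c Wp = 0 := by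
      rw [pot]
      refine Finset.sum_eq_zero fun d hd => ?_
      have hd3 := (hDmem d).1 hd
      have hwin := hcwin.2 d (hDsub d hd) (hUc hd3)
      omega
    have hmono := reach_pot hre (Ws ∪ Xs ∪ Ys) M.length c
    omega
  exact le_antisymm (Nat.sInf_le hmem3q) (le_csInf ⟨_, hmem3q⟩ hlow)
end

section
/- In the election constructed from a 3DM instance (M,W,X,Y) with ||M|| > 1 and q = ||W||, the Dodgson score of the distinguished candidate c is at most 3q+1, regardless of whether M contains a matching. -/
section AuxUB
variable {α : Type*} [DecidableEq α]

lemma prefers_at_end' {l : List α} {c d : α} (hc : c ∉ l) (hd : d ∈ l) :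
    (l ++ [c]).idxOf d < (l ++ [c]).idxOf c := by
  rw [List.idxOf_append_of_mem hd, List.idxOf_append_of_notMem hc]
  have := List.idxOf_lt_length_iff.2 hd
  simp only [List.idxOf_cons_self]
  omega

lemma switch_step' (P Q : List (List α)) (l r : List α) (x y : α) :
    SwitchProfile (P ++ (l ++ x :: y :: r) :: Q) (P ++ (l ++ y :: x :: r) :: Q) :=
  ⟨P, Q, _, _, rfl, rfl, l, r, x, y, rfl, rfl⟩

lemma reach_move' (c : α) : ∀ (r l : List α) (P Q : List (List α)),
    Reach SwitchProfile r.length (P ++ (l ++ c :: r) :: Q) (P ++ (l ++ r ++ [c]) :: Q)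
  | [], l, P, Q => by simp [Reach]
  | y :: r, l, P, Q => by
    refine ⟨P ++ (l ++ y :: c :: r) :: Q, switch_step' P Q l r c y, ?_⟩
    have h := reach_move' c r (l ++ [y]) P Q
    simpa using h

end AuxUB

/-- In the election from a 3DM instance with `||M|| > 1` and
`q = ||W||`, the Dodgson score of `c` is at most `3q + 1`, regardless of
whether `M` contains a matching. -/
theorem tdm_score_upper_bound {α : Type*} [DecidableEq α]
    (Ws Xs Ys : Finset α) (M : List (α × α × α)) (c s t : α)
    (V : List (List α))
    (hok : TDMOK Ws Xs Ys M c s t)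
    (hel : IsTDMElection Ws Xs Ys M c s t V) :
    DodgsonScore (TDMCands Ws Xs Ys c s t) V c ≤ 3 * Ws.card + 1 := by
  classical
  obtain ⟨hWne, hXne, hYne, hWX, hWY, hXY, hcX, hcY, hM, hMnd, hMlen,
    hcU, hsU, htU, hcs, hct, hst⟩ := hok
  obtain ⟨V₁, V₂, hV, hV2len, ⟨hlen1, htrip⟩, htop⟩ := hel
  set Cs : Finset α := TDMCands Ws Xs Ys c s t with hCsdef
  have hq : 1 ≤ Ws.card := Finset.Nonempty.card_pos hWne
  -- the first voter
  have hV₁ne : V₁ ≠ [] := by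
    intro h; rw [h] at hlen1; simp at hlen1; omega
  obtain ⟨v₀, V₁', rfl⟩ := List.exists_cons_of_ne_nil hV₁ne
  have h0 : (0 : ℕ) < (v₀ :: V₁').length := by simp
  have ht0 := htrip ⟨0, h0⟩
  set m0 : α × α × α := M.get ⟨0, hlen1 ▸ h0⟩ with hm0def
  set w : α := m0.1
  set x : α := m0.2.1
  set y : α := m0.2.2
  obtain ⟨R, hRnd, hRmem, hv₀⟩ := ht0
  simp only [List.get] at hv₀
  norm_num at hv₀
  -- basic memberships and distinctness
  have hm0M : m0 ∈ M := List.get_mem M ⟨0, hlen1 ▸ h0⟩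
  have hwW : w ∈ Ws := (hM m0 hm0M).1
  have hxX : x ∈ Xs := (hM m0 hm0M).2.1
  have hyY : y ∈ Ys := (hM m0 hm0M).2.2
  have hwU : w ∈ Ws ∪ Xs ∪ Ys := by simp [hwW]
  have hxU : x ∈ Ws ∪ Xs ∪ Ys := by simp [hxX]
  have hyU : y ∈ Ws ∪ Xs ∪ Ys := by simp [hyY]
  have hwx : w ≠ x := fun h => Finset.disjoint_left.1 hWX hwW (h ▸ hxX)
  have hwy : w ≠ y := fun h => Finset.disjoint_left.1 hWY hwW (h ▸ hyY)
  have hxy : x ≠ y := fun h => Finset.disjoint_left.1 hXY hxX (h ▸ hyY)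
  have hcw : c ≠ w := fun h => hcU (h ▸ hwU)
  have hcx : c ≠ x := fun h => hcU (h ▸ hxU)
  have hcy : c ≠ y := fun h => hcU (h ▸ hyU)
  have hsw : s ≠ w := fun h => hsU (h ▸ hwU)
  have hsx : s ≠ x := fun h => hsU (h ▸ hxU)
  have hsy : s ≠ y := fun h => hsU (h ▸ hyU)
  have htw : t ≠ w := fun h => htU (h ▸ hwU)
  have htx : t ≠ x := fun h => htU (h ▸ hxU)
  have hty : t ≠ y := fun h => htU (h ▸ hyU)
  have hcR : c ∉ R := fun h => ((hRmem c).1 h).2 (by simp)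
  have hsR : s ∉ R := fun h => ((hRmem s).1 h).2 (by simp)
  have htR : t ∉ R := fun h => ((hRmem t).1 h).2 (by simp)
  have hwR : w ∉ R := fun h => ((hRmem w).1 h).2 (by simp)
  have hxR : x ∉ R := fun h => ((hRmem x).1 h).2 (by simp)
  have hyR : y ∉ R := fun h => ((hRmem y).1 h).2 (by simp)
  -- candidate set membership
  have hcCs : c ∈ Cs := by simp [hCsdef, TDMCands]
  -- cardinalities
  have hCscard : Cs.card = 3 * Ws.card + 3 := by
    have d1 : Disjoint (Ws ∪ Xs) Ys := Finset.disjoint_union_left.2 ⟨hWY, hXY⟩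
    have d2 : Disjoint (Ws ∪ Xs ∪ Ys) ({c, s, t} : Finset α) := by
      rw [Finset.disjoint_right]
      intro a ha
      simp only [Finset.mem_insert, Finset.mem_singleton] at ha
      rcases ha with rfl | rfl | rfl <;> assumption
    have h3 : ({c, s, t} : Finset α).card = 3 := by
      rw [Finset.card_insert_of_notMem (by simp [hcs, hct]),
        Finset.card_insert_of_notMem (by simp [hst]), Finset.card_singleton]
    rw [hCsdef, TDMCands, Finset.card_union_of_disjoint d2,
      Finset.card_union_of_disjoint d1, Finset.card_union_of_disjoint hWX, h3,
      ← hcX, ← hcY]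
    ring
  have hsix : ({s, c, w, x, y, t} : Finset α).card = 6 := by
    rw [Finset.card_insert_of_notMem (by simp [hcs.symm, hsw, hsx, hsy, hst]),
      Finset.card_insert_of_notMem (by simp [hcw, hcx, hcy, hct]),
      Finset.card_insert_of_notMem (by simp [hwx, hwy, htw.symm]),
      Finset.card_insert_of_notMem (by simp [hxy, htx.symm]),
      Finset.card_insert_of_notMem (by simp [hty.symm]), Finset.card_singleton]
  have hsixsub : ({s, c, w, x, y, t} : Finset α) ⊆ Cs := by
    intro z hz
    simp only [Finset.mem_insert, Finset.mem_singleton] at hz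
    rcases hz with rfl | rfl | rfl | rfl | rfl | rfl <;>
      simp [hCsdef, TDMCands, hwW, hxX, hyY]
  have hRlen : R.length = 3 * Ws.card - 3 := by
    have hfin : R.toFinset = Cs \ ({s, c, w, x, y, t} : Finset α) := by
      ext z
      simp only [List.mem_toFinset, Finset.mem_sdiff]
      exact hRmem z
    have := List.toFinset_card_of_nodup hRnd
    rw [hfin, Finset.card_sdiff_of_subset hsixsub, hCscard, hsix] at this
    omega
  -- the target profile
  set L0 : List α := [s, w, x, y, t] ++ R with hL0
  set W' : List (List α) := (L0 ++ [c]) :: (V₁' ++ V₂) with hW'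
  have hcL0 : c ∉ L0 := by simp [hL0, hcs, hcw, hcx, hcy, hct, hcR]
  -- reachability
  have hreach : Reach SwitchProfile (3 * Ws.card + 1) V W' := by
    have h := reach_move' c ([w, x, y, t] ++ R) [s] [] (V₁' ++ V₂)
    have hlen : ([w, x, y, t] ++ R).length = 3 * Ws.card + 1 := by
      simp [hRlen]; omega
    rw [hlen] at h
    have e1 : V = [] ++ ([s] ++ c :: ([w, x, y, t] ++ R)) :: (V₁' ++ V₂) := by
      rw [hV, hv₀]; simp
    have e2 : W' = [] ++ ([s] ++ ([w, x, y, t] ++ R) ++ [c]) :: (V₁' ++ V₂) := by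
      simp [hW', hL0]
    rw [e1, e2]
    exact h
  -- c is a Condorcet winner in W'
  have hlens : W'.length = V.length := by
    simp [hW', hV]
  have hVlen : V.length = 2 * M.length - 1 := by
    rw [hV]
    simp only [List.length_append]
    rw [hV2len]
    simp only [List.length_cons] at hlen1 ⊢
    omega
  have hcw' : CondorcetWinner Cs W' c := by
    refine ⟨hcCs, fun d hd hdc => ?_⟩
    -- d is in L0
    have hdL0 : d ∈ L0 := by
      by_cases h1 : d ∈ ({s, c, w, x, y, t} : Finset α)
      · simp only [Finset.mem_insert, Finset.mem_singleton] at h1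
        rcases h1 with rfl | rfl | rfl | rfl | rfl | rfl <;> simp [hL0] <;> exact absurd rfl hdc
      · have : d ∈ R := (hRmem d).2 ⟨hd, h1⟩
        simp [hL0, this]
    -- first voter prefers c to d
    have hp0 : (L0 ++ [c]).idxOf d < (L0 ++ [c]).idxOf c :=
      prefers_at_end' hcL0 hdL0
    -- every top voter prefers c to d
    have hptop : ∀ v ∈ V₂, v.idxOf d < v.idxOf c := by
      intro v hv
      obtain ⟨R', hR'nd, hR'mem, rfl⟩ := htop v hv
      have hcR' : c ∉ R' := fun h => ((hR'mem c).1 h).2 rfl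
      have hdR' : d ∈ R' := (hR'mem d).2 ⟨hd, hdc⟩
      exact prefers_at_end' hcR' hdR'
    -- counting
    have hcount : M.length ≤ numPrefer W' c d := by
      have hfilt : V₂.filter (fun v => decide (v.idxOf d < v.idxOf c)) = V₂ :=
        List.filter_eq_self.2 fun v hv => by simpa using hptop v hv
      unfold numPrefer
      rw [hW', List.filter_cons_of_pos (by simpa using hp0), List.filter_append, hfilt]
      simp only [List.length_cons, List.length_append]
      rw [hV2len]
      omega
    rw [hlens, hVlen]
    omega
  -- conclude
  exact Nat.sInf_le ⟨W', hreach, hcw'⟩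
end

section
/- In the election constructed from a 3DM instance (M,W,X,Y) with ||M|| > 1 and q = ||W||, if the Dodgson score of the distinguished candidate c equals 3q, then M contains a matching. -/
namespace TDMaux

variable {α : Type*} [DecidableEq α]

lemma indexOf_append_form (l l' : List α) (z : α) :
    (l ++ l').idxOf z = if z ∈ l then l.idxOf z else l.length + l'.idxOf z := by
  by_cases h : z ∈ l
  · simp [h, List.idxOf_append_of_mem]
  · simp [h, List.idxOf_append_of_notMem]

/-- discordant pairs between two orders -/
def Disc (u f : List α) : Finset (α × α) :=
  (u.toFinset ×ˢ u.toFinset).filter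
    (fun p => u.idxOf p.1 < u.idxOf p.2 ∧ f.idxOf p.2 < f.idxOf p.1)

/-- number of discordant pairs -/
def Dd (u f : List α) : ℕ := (Disc u f).card

lemma Dd_self (u : List α) : Dd u u = 0 := by
  simp only [Dd, Disc, Finset.card_eq_zero, Finset.filter_eq_empty_iff]
  intro p _
  omega

lemma switch_idx (l r : List α) (a b : α) (hab : a ≠ b) (p q : α)
    (hne : ¬(p = a ∧ q = b))
    (h : (l ++ a :: b :: r).idxOf p < (l ++ a :: b :: r).idxOf q) :
    (l ++ b :: a :: r).idxOf p < (l ++ b :: a :: r).idxOf q := by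
  have key : ∀ z : α, z ≠ a → z ≠ b →
      (a :: b :: r).idxOf z = 2 + r.idxOf z ∧
      (b :: a :: r).idxOf z = 2 + r.idxOf z := by
    intro z hza hzb
    rw [List.idxOf_cons_ne _ (Ne.symm hza), List.idxOf_cons_ne _ (Ne.symm hzb),
      List.idxOf_cons_ne _ (Ne.symm hzb), List.idxOf_cons_ne _ (Ne.symm hza)]
    omega
  have ia1 : (a :: b :: r).idxOf a = 0 := List.idxOf_cons_self
  have ia2 : (b :: a :: r).idxOf a = 1 := by
    rw [List.idxOf_cons_ne _ (Ne.symm hab), List.idxOf_cons_self]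
  have ib1 : (a :: b :: r).idxOf b = 1 := by
    rw [List.idxOf_cons_ne _ hab, List.idxOf_cons_self]
  have ib2 : (b :: a :: r).idxOf b = 0 := List.idxOf_cons_self
  rw [indexOf_append_form] at h ⊢
  rw [indexOf_append_form] at h ⊢
  by_cases hpl : p ∈ l <;> by_cases hql : q ∈ l <;>
    simp only [hpl, hql, if_pos, if_neg, if_true, if_false] at h ⊢
  · exact h
  · have := List.idxOf_lt_length_iff.2 hpl
    omega
  · have hq := List.idxOf_lt_length_iff.2 hql
    by_cases hpa : p = a
    · rw [hpa] at h ⊢; rw [ia1] at h; rw [ia2]; omega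
    · by_cases hpb : p = b
      · rw [hpb] at h ⊢; rw [ib1] at h; rw [ib2]; omega
      · rw [(key p hpa hpb).1] at h; rw [(key p hpa hpb).2]; omega
  · by_cases hpa : p = a
    · rw [hpa] at h ⊢
      rw [ia1] at h; rw [ia2]
      by_cases hqb : q = b
      · exact absurd ⟨hpa, hqb⟩ hne
      · by_cases hqa : q = a
        · rw [hqa] at h ⊢; rw [ia1] at h; rw [ia2]; omega
        · rw [(key q hqa hqb).1] at h; rw [(key q hqa hqb).2]; omega
    · by_cases hpb : p = b
      · rw [hpb] at h ⊢
        rw [ib1] at h; rw [ib2]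
        by_cases hqa : q = a
        · rw [hqa] at h ⊢; rw [ia1] at h; rw [ia2]; omega
        · by_cases hqb : q = b
          · rw [hqb] at h ⊢; rw [ib1] at h; omega
          · rw [(key q hqa hqb).1] at h; rw [(key q hqa hqb).2]; omega
      · rw [(key p hpa hpb).1] at h; rw [(key p hpa hpb).2]
        by_cases hqa : q = a
        · rw [hqa] at h ⊢; rw [ia1] at h; omega
        · by_cases hqb : q = b
          · rw [hqb] at h ⊢; rw [ib1] at h; rw [ib2]; omega
          · rw [(key q hqa hqb).1] at h; rw [(key q hqa hqb).2]; omega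

omit [DecidableEq α] in
lemma switch_mem {u u' : List α} (h : SwitchVoter u u') : ∀ z, z ∈ u ↔ z ∈ u' := by
  obtain ⟨l, r, a, b, hu, hu'⟩ := h
  intro z
  subst hu hu'
  simp only [List.mem_append, List.mem_cons]
  tauto

lemma switch_toFinset {u u' : List α} (h : SwitchVoter u u') :
    u.toFinset = u'.toFinset := by
  ext z; simpa using switch_mem h z

lemma switch_Dd_le {u u' : List α} (h : SwitchVoter u u') (f : List α) :
    Dd u f ≤ Dd u' f + 1 := by
  obtain ⟨l, r, a, b, hu, hu'⟩ := h
  by_cases hab : a = b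
  · subst hab
    have : u = u' := by rw [hu, hu']
    rw [this]; omega
  have htf : u.toFinset = u'.toFinset := switch_toFinset ⟨l, r, a, b, hu, hu'⟩
  have hsub : Disc u f ⊆ insert (a, b) (Disc u' f) := by
    intro p hp
    simp only [Disc, Finset.mem_filter, Finset.mem_product] at hp
    obtain ⟨⟨hp1, hp2⟩, hlt, hf⟩ := hp
    by_cases hpe : p = (a, b)
    · simp [hpe]
    · have hne : ¬(p.1 = a ∧ p.2 = b) := by
        intro ⟨h1, h2⟩; exact hpe (Prod.ext h1 h2)
      rw [Finset.mem_insert]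
      right
      simp only [Disc, Finset.mem_filter, Finset.mem_product, ← htf]
      refine ⟨⟨hp1, hp2⟩, ?_, hf⟩
      rw [hu'] at *
      rw [hu] at hlt
      exact switch_idx l r a b hab p.1 p.2 hne hlt
  calc Dd u f ≤ (insert (a, b) (Disc u' f)).card := Finset.card_le_card hsub
    _ ≤ Dd u' f + 1 := Finset.card_insert_le _ _

/-- the total number of discordant pairs between two profiles -/
noncomputable def Phi (A B : List (List α)) : ℕ :=
  ∑ j ∈ Finset.range A.length, Dd (A.getD j []) (B.getD j [])

omit [DecidableEq α] in
lemma getD_append_ne {β : Type*} (P Q : List β) (v w : β) (d : β) (j : ℕ)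
    (h : j ≠ P.length) :
    (P ++ v :: Q).getD j d = (P ++ w :: Q).getD j d := by
  rcases lt_or_ge j P.length with hl | hl
  · rw [List.getD_append _ _ _ _ hl, List.getD_append _ _ _ _ hl]
  · rw [List.getD_append_right _ _ _ _ hl, List.getD_append_right _ _ _ _ hl]
    obtain ⟨k, hk⟩ : ∃ k, j - P.length = k + 1 := ⟨j - P.length - 1, by omega⟩
    rw [hk]
    simp

omit [DecidableEq α] in
lemma getD_append_self {β : Type*} (P Q : List β) (v : β) (d : β) :
    (P ++ v :: Q).getD P.length d = v := by
  rw [List.getD_append_right _ _ _ _ le_rfl, Nat.sub_self]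
  simp

omit [DecidableEq α] in
lemma switchProfile_length {A A' : List (List α)} (h : SwitchProfile A A') :
    A.length = A'.length := by
  obtain ⟨P, Q, v, w, h1, h2, _⟩ := h
  subst h1; subst h2; simp

lemma switchProfile_Phi {A A' : List (List α)} (h : SwitchProfile A A')
    (B : List (List α)) : Phi A B ≤ Phi A' B + 1 := by
  obtain ⟨P, Q, v, w, h1, h2, hsw⟩ := h
  have hlen : A'.length = A.length := by rw [h1, h2]; simp
  have hPlt : P.length < A.length := by rw [h1]; simp
  unfold Phi
  rw [hlen]
  calc ∑ j ∈ Finset.range A.length, Dd (A.getD j []) (B.getD j [])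
      ≤ ∑ j ∈ Finset.range A.length,
        (Dd (A'.getD j []) (B.getD j []) + if j = P.length then 1 else 0) := by
        apply Finset.sum_le_sum
        intro j _
        by_cases hjP : j = P.length
        · subst hjP
          rw [h1, h2, getD_append_self, getD_append_self, if_pos rfl]
          exact switch_Dd_le hsw _
        · rw [h1, h2, getD_append_ne P Q v w [] j hjP, if_neg hjP]
          omega
    _ = (∑ j ∈ Finset.range A.length, Dd (A'.getD j []) (B.getD j [])) + 1 := by
        rw [Finset.sum_add_distrib, Finset.sum_ite_eq' (Finset.range A.length)]
        rw [if_pos (Finset.mem_range.2 hPlt)]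

omit [DecidableEq α] in
lemma reach_length : ∀ {k : ℕ} {A B : List (List α)},
    Reach SwitchProfile k A B → A.length = B.length := by
  intro k
  induction k with
  | zero => intro A B h; rw [h]
  | succ k ih =>
    intro A B h
    obtain ⟨Am, h1, h2⟩ := h
    exact (switchProfile_length h1).trans (ih h2)

lemma reach_Phi : ∀ {k : ℕ} {A B : List (List α)},
    Reach SwitchProfile k A B → Phi A B ≤ k := by
  intro k
  induction k with
  | zero =>
    intro A B h
    rw [h]
    unfold Phi
    rw [Finset.sum_eq_zero]
    intro j _
    exact Dd_self _
  | succ k ih =>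
    intro A B h
    obtain ⟨Am, h1, h2⟩ := h
    calc Phi A B ≤ Phi Am B + 1 := switchProfile_Phi h1 B
      _ ≤ k + 1 := by have := ih h2; omega

omit [DecidableEq α] in
lemma length_filter_eq {β : Type*} (L : List β) (p : β → Bool) (d : β) :
    (L.filter p).length
      = ((Finset.range L.length).filter (fun j => p (L.getD j d) = true)).card := by
  induction L with
  | nil => simp
  | cons a L ih =>
    rw [Finset.card_filter, List.length_cons, Finset.sum_range_succ']
    simp only [List.getD_cons_succ, List.getD_cons_zero]
    rw [List.filter_cons]
    rw [← Finset.card_filter, ← ih]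
    by_cases hpa : p a
    · simp [hpa]
    · simp [hpa]

omit [DecidableEq α] in
lemma all_one {γ : Type*} {st : Finset γ} {f : γ → ℕ} (h1 : ∀ i ∈ st, 1 ≤ f i)
    (h2 : ∑ i ∈ st, f i = st.card) : ∀ i ∈ st, f i = 1 := by
  have h3 : ∑ i ∈ st, (f i - 1) = 0 := by
    have he : ∑ i ∈ st, f i = ∑ i ∈ st, ((f i - 1) + 1) :=
      Finset.sum_congr rfl (fun i hi => by have := h1 i hi; omega)
    rw [he, Finset.sum_add_distrib] at h2
    simp only [Finset.sum_const, smul_eq_mul, mul_one] at h2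
    omega
  intro i hi
  have h4 := (Finset.sum_eq_zero_iff).1 h3 i hi
  have := h1 i hi
  omega

/-- the pair (c,d) flips from d-above-c to c-above-d in voter j -/
def gainedP (Vp Wp : List (List α)) (c d : α) (j : ℕ) : Prop :=
  ¬ ((Vp.getD j []).idxOf d < (Vp.getD j []).idxOf c) ∧
    (Wp.getD j []).idxOf d < (Wp.getD j []).idxOf c

instance (Vp Wp : List (List α)) (c d : α) : DecidablePred (gainedP Vp Wp c d) :=
  fun _ => by unfold gainedP; infer_instance

/-- the set of voters where (c,d) flips -/
def GainedS (Vp Wp : List (List α)) (c d : α) : Finset ℕ :=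
  (Finset.range Vp.length).filter (gainedP Vp Wp c d)

lemma numPrefer_eq_card (Vp : List (List α)) (c d : α) :
    numPrefer Vp c d = ((Finset.range Vp.length).filter
      (fun j => (Vp.getD j []).idxOf d < (Vp.getD j []).idxOf c)).card := by
  rw [numPrefer, length_filter_eq _ _ []]
  congr 1
  ext j
  simp

end TDMaux

open TDMaux

set_option maxHeartbeats 2000000 in
/-- In the election from a 3DM instance with `||M|| > 1` and
`q = ||W||`, if the Dodgson score of `c` equals `3q` then `M` contains a
matching. -/

theorem tdm_score_implies_matching {α : Type*} [DecidableEq α]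
    (Ws Xs Ys : Finset α) (M : List (α × α × α)) (c s t : α)
    (V : List (List α))
    (hok : TDMOK Ws Xs Ys M c s t)
    (hel : IsTDMElection Ws Xs Ys M c s t V)
    (hscore : DodgsonScore (TDMCands Ws Xs Ys c s t) V c = 3 * Ws.card) :
    HasMatching Ws M := by
  classical
  obtain ⟨hWne, hXne, hYne, hWX, hWY, hXY, hcX, hcY, hMst, hMnd, hMlen, hcU, hsU, htU,
    hcs, hct, hst⟩ := hok
  obtain ⟨V₁, V₂, hV, hV2, ⟨hV1, htrip⟩, htop⟩ := hel
  have hq1 : 1 ≤ Ws.card := Finset.card_pos.2 hWne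
  have hVlen : V.length = M.length + (M.length - 1) := by
    rw [hV, List.length_append, hV1, hV2]
  -- subset facts
  have hUC : Ws ∪ Xs ∪ Ys ⊆ TDMCands Ws Xs Ys c s t := Finset.subset_union_left
  have hcC : c ∈ TDMCands Ws Xs Ys c s t := by simp [TDMCands]
  have hWXYc : ∀ d ∈ Ws ∪ Xs ∪ Ys, d ≠ c := fun d hd he => hcU (he ▸ hd)
  have hWXYs : ∀ d ∈ Ws ∪ Xs ∪ Ys, d ≠ s := fun d hd he => hsU (he ▸ hd)
  have hWXYt : ∀ d ∈ Ws ∪ Xs ∪ Ys, d ≠ t := fun d hd he => htU (he ▸ hd)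
  have hWsub : Ws ⊆ Ws ∪ Xs ∪ Ys :=
    Finset.subset_union_left.trans Finset.subset_union_left
  have hXsub : Xs ⊆ Ws ∪ Xs ∪ Ys :=
    Finset.subset_union_right.trans Finset.subset_union_left
  have hYsub : Ys ⊆ Ws ∪ Xs ∪ Ys := Finset.subset_union_right
  -- the witness profile
  have hmemS : (3 * Ws.card) ∈ {k | ∃ Wp, Reach SwitchProfile k V Wp ∧
      CondorcetWinner (TDMCands Ws Xs Ys c s t) Wp c} := by
    have hSne : {k | ∃ Wp, Reach SwitchProfile k V Wp ∧
        CondorcetWinner (TDMCands Ws Xs Ys c s t) Wp c}.Nonempty := by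
      by_contra hc
      rw [Set.not_nonempty_iff_eq_empty] at hc
      rw [DodgsonScore, hc, Nat.sInf_empty] at hscore
      omega
    have hmem' := Nat.sInf_mem hSne
    rw [DodgsonScore] at hscore
    rw [hscore] at hmem'
    exact hmem' 
  obtain ⟨Wf, hreach, hcw⟩ := hmemS
  have hWflen : V.length = Wf.length := reach_length hreach
  have hPhi : Phi V Wf ≤ 3 * Ws.card := reach_Phi hreach
  -- triple voter normal form
  have hTV : ∀ j (hj : j < M.length), ∃ σ τ R,
      ((σ = s ∧ τ = t) ∨ (σ = t ∧ τ = s)) ∧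
      (∀ z, z ∈ R ↔ (z ∈ TDMCands Ws Xs Ys c s t ∧
        z ∉ ({s, c, (M.get ⟨j, hj⟩).1, (M.get ⟨j, hj⟩).2.1,
          (M.get ⟨j, hj⟩).2.2, t} : Finset α))) ∧
      V.getD j [] = σ :: c :: (M.get ⟨j, hj⟩).1 :: (M.get ⟨j, hj⟩).2.1 ::
        (M.get ⟨j, hj⟩).2.2 :: τ :: R := by
    intro j hj
    have hj1 : j < V₁.length := by rw [hV1]; exact hj
    have hgd : V.getD j [] = V₁.get ⟨j, hj1⟩ := by
      rw [hV, List.getD_append _ _ _ _ hj1]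
      exact List.getD_eq_get _ _ ⟨j, hj1⟩
    obtain ⟨R, hRnd, hRspec, hform⟩ := htrip ⟨j, hj1⟩
    by_cases hpar : ((j % 2 == 0) : Bool) = true
    · refine ⟨s, t, R, Or.inl ⟨rfl, rfl⟩, hRspec, ?_⟩
      rw [hgd, hform]
      simp only [hpar, if_true]
      rfl
    · refine ⟨t, s, R, Or.inr ⟨rfl, rfl⟩, hRspec, ?_⟩
      rw [hgd, hform]
      rw [Bool.not_eq_true] at hpar
      simp only [hpar, Bool.false_eq_true, if_false]
      rfl
  -- top voter normal form
  have hTopV : ∀ j, M.length ≤ j → j < V.length →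
      ∃ R : List α, (∀ z, z ∈ R ↔ (z ∈ TDMCands Ws Xs Ys c s t ∧ z ≠ c)) ∧
        V.getD j [] = R ++ [c] := by
    intro j hj1 hj2
    have hj1' : V₁.length ≤ j := by rw [hV1]; exact hj1
    have hjlen : j - V₁.length < V₂.length := by
      rw [hV1, hV2]
      rw [hV, List.length_append, hV1, hV2] at hj2
      omega
    have hgd : V.getD j [] = V₂.get ⟨j - V₁.length, hjlen⟩ := by
      rw [hV, List.getD_append_right _ _ _ _ hj1']
      exact List.getD_eq_get _ _ ⟨j - V₁.length, hjlen⟩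
    obtain ⟨R, hRnd, hRspec, hform⟩ := htop _ (List.get_mem V₂ ⟨_, hjlen⟩)
    exact ⟨R, hRspec, by rw [hgd, hform]⟩
  -- membership of candidates in voters
  have hmemV : ∀ j, j < V.length → ∀ z, z ∈ TDMCands Ws Xs Ys c s t →
      z ∈ V.getD j [] := by
    intro j hjn z hz
    rcases lt_or_ge j M.length with hjm | hjm
    · obtain ⟨σ, τ, R, hστ, hRspec, hform⟩ := hTV j hjm
      rw [hform]
      by_cases hzR : z ∈ ({s, c, (M.get ⟨j, hjm⟩).1, (M.get ⟨j, hjm⟩).2.1,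
          (M.get ⟨j, hjm⟩).2.2, t} : Finset α)
      · simp only [Finset.mem_insert, Finset.mem_singleton] at hzR
        simp only [List.mem_cons]
        rcases hστ with ⟨h1, h2⟩ | ⟨h1, h2⟩ <;> subst h1 <;> subst h2 <;> tauto
      · have : z ∈ R := (hRspec z).2 ⟨hz, hzR⟩
        simp [this]
    · obtain ⟨R, hRspec, hform⟩ := hTopV j hjm hjn
      rw [hform]
      by_cases hzc : z = c
      · simp [hzc]
      · simp [(hRspec z).2 ⟨hz, hzc⟩]
  -- shape of initial triple voters (weak form)
  have hV1shape : ∀ v ∈ V₁, ∃ p R, (p = s ∨ p = t) ∧ v = p :: c :: R := by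
    intro v hv
    obtain ⟨i, hi⟩ := List.mem_iff_get.1 hv
    obtain ⟨R, _, _, hform⟩ := htrip i
    by_cases hpar : (((i : ℕ) % 2 == 0) : Bool) = true
    · simp only [hpar, if_true] at hform
      exact ⟨s, _, Or.inl rfl, by rw [← hi, hform]; rfl⟩
    · rw [Bool.not_eq_true] at hpar
      simp only [hpar, Bool.false_eq_true, if_false] at hform
      exact ⟨t, _, Or.inr rfl, by rw [← hi, hform]; rfl⟩
  -- initial counts
  have hinit : ∀ d ∈ Ws ∪ Xs ∪ Ys, numPrefer V c d = M.length - 1 := by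
    intro d hd
    rw [numPrefer, hV, List.filter_append, List.length_append]
    have h1 : V₁.filter (fun v => decide (v.idxOf d < v.idxOf c)) = [] := by
      rw [List.filter_eq_nil_iff]
      intro v hv
      obtain ⟨p, R, hp, hform⟩ := hV1shape v hv
      subst hform
      simp only [decide_eq_true_eq, not_lt]
      have hdp : d ≠ p := by
        rcases hp with h | h <;> subst h
        · exact hWXYs d hd
        · exact hWXYt d hd
      have hcp : c ≠ p := by
        rcases hp with h | h <;> subst h
        · exact hcs
        · exact hct
      rw [List.idxOf_cons_ne _ (Ne.symm hdp), List.idxOf_cons_ne _ (Ne.symm hcp),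
        List.idxOf_cons_self]
      omega
    have h2 : V₂.filter (fun v => decide (v.idxOf d < v.idxOf c)) = V₂ := by
      rw [List.filter_eq_self]
      intro v hv
      obtain ⟨R, hRnd, hRspec, hform⟩ := htop v hv
      subst hform
      simp only [decide_eq_true_eq]
      have hdR : d ∈ R := (hRspec d).2 ⟨hUC hd, hWXYc d hd⟩
      have hcR : c ∉ R := fun hc' => ((hRspec c).1 hc').2 rfl
      rw [List.idxOf_append_of_mem hdR, List.idxOf_append_of_notMem hcR]
      have := List.idxOf_lt_length_iff.2 hdR
      simp only [List.idxOf_cons_self, Nat.add_zero]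
      omega
    rw [h1, h2, hV2]
    simp only [List.length_nil]
    omega
  -- final counts
  have hfin : ∀ d ∈ Ws ∪ Xs ∪ Ys, M.length ≤ numPrefer Wf c d := by
    intro d hd
    have h2 := hcw.2 d (hUC hd) (hWXYc d hd)
    rw [← hWflen, hVlen] at h2
    omega
  -- each candidate needs at least one gaining flip
  have hG1 : ∀ d ∈ Ws ∪ Xs ∪ Ys, 1 ≤ (GainedS V Wf c d).card := by
    intro d hd
    have e1 := numPrefer_eq_card V c d
    have e2 := numPrefer_eq_card Wf c d
    rw [← hWflen] at e2
    have hsub : (Finset.range V.length).filter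
        (fun j => (Wf.getD j []).idxOf d < (Wf.getD j []).idxOf c)
        ⊆ ((Finset.range V.length).filter
            (fun j => (V.getD j []).idxOf d < (V.getD j []).idxOf c))
          ∪ GainedS V Wf c d := by
      intro j hj
      simp only [Finset.mem_filter, Finset.mem_union, GainedS, gainedP,
        Finset.mem_range] at *
      tauto
    have hc1 := (Finset.card_le_card hsub).trans (Finset.card_union_le _ _)
    rw [← e2, ← e1] at hc1
    have := hfin d hd
    have := hinit d hd
    omega
  -- mapping gained candidates to discordant pairs
  have hmaps : ∀ j, j < V.length → ∀ d ∈ (Ws ∪ Xs ∪ Ys).filter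
      (fun d => gainedP V Wf c d j), (c, d) ∈ Disc (V.getD j []) (Wf.getD j []) := by
    intro j hj d hd
    rw [Finset.mem_filter] at hd
    obtain ⟨hd1, hd2, hd3⟩ := hd
    have hcd : c ≠ d := Ne.symm (hWXYc d hd1)
    have hcm : c ∈ V.getD j [] := hmemV j hj c hcC
    have hdm : d ∈ V.getD j [] := hmemV j hj d (hUC hd1)
    simp only [Disc, Finset.mem_filter, Finset.mem_product, List.mem_toFinset]
    refine ⟨⟨hcm, hdm⟩, ?_, hd3⟩
    have hne : (V.getD j []).idxOf c ≠ (V.getD j []).idxOf d :=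
      fun h => hcd ((List.idxOf_inj hcm).1 h)
    omega
  have hhD : ∀ j ∈ Finset.range V.length,
      ((Ws ∪ Xs ∪ Ys).filter (fun d => gainedP V Wf c d j)).card
        ≤ Dd (V.getD j []) (Wf.getD j []) := by
    intro j hj
    rw [Finset.mem_range] at hj
    apply Finset.card_le_card_of_injOn (fun d => (c, d)) (hmaps j hj)
    intro d1 _ d2 _ h
    exact congrArg Prod.snd h
  -- double counting
  have hdouble : ∑ d ∈ Ws ∪ Xs ∪ Ys, (GainedS V Wf c d).card
      = ∑ j ∈ Finset.range V.length,
          ((Ws ∪ Xs ∪ Ys).filter (fun d => gainedP V Wf c d j)).card := by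
    simp only [GainedS, Finset.card_filter]
    rw [Finset.sum_comm]
  have hcard3 : (Ws ∪ Xs ∪ Ys).card = 3 * Ws.card := by
    rw [Finset.card_union_of_disjoint (Finset.disjoint_union_left.2 ⟨hWY, hXY⟩),
      Finset.card_union_of_disjoint hWX]
    omega
  -- the sandwich
  have hlow : 3 * Ws.card ≤ ∑ d ∈ Ws ∪ Xs ∪ Ys, (GainedS V Wf c d).card := by
    calc 3 * Ws.card = ∑ _d ∈ Ws ∪ Xs ∪ Ys, 1 := by
          rw [Finset.sum_const, smul_eq_mul, mul_one, hcard3]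
      _ ≤ _ := Finset.sum_le_sum hG1
  have hhigh : ∑ j ∈ Finset.range V.length,
      ((Ws ∪ Xs ∪ Ys).filter (fun d => gainedP V Wf c d j)).card ≤ 3 * Ws.card :=
    (Finset.sum_le_sum hhD).trans hPhi
  have hEq1 : ∑ d ∈ Ws ∪ Xs ∪ Ys, (GainedS V Wf c d).card = 3 * Ws.card :=
    le_antisymm (by rw [hdouble]; exact hhigh) hlow
  have hGone : ∀ d ∈ Ws ∪ Xs ∪ Ys, (GainedS V Wf c d).card = 1 :=
    all_one hG1 (by rw [hEq1, hcard3])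
  have hDsum : ∑ j ∈ Finset.range V.length, Dd (V.getD j []) (Wf.getD j [])
      = 3 * Ws.card :=
    le_antisymm hPhi (by rw [← hEq1, hdouble]; exact Finset.sum_le_sum hhD)
  have hDeq : ∀ j ∈ Finset.range V.length,
      ((Ws ∪ Xs ∪ Ys).filter (fun d => gainedP V Wf c d j)).card
        = Dd (V.getD j []) (Wf.getD j []) :=
    (Finset.sum_eq_sum_iff_of_le hhD).1 (by rw [hDsum, ← hdouble, hEq1])
  -- surjectivity of the gained-pairs map
  have hsurj : ∀ j, j < V.length → ∀ p ∈ Disc (V.getD j []) (Wf.getD j []),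
      ∃ d, d ∈ Ws ∪ Xs ∪ Ys ∧ gainedP V Wf c d j ∧ p = (c, d) := by
    intro j hj p hp
    have hFsub : ((Ws ∪ Xs ∪ Ys).filter (fun d => gainedP V Wf c d j)).image
        (fun d => (c, d)) ⊆ Disc (V.getD j []) (Wf.getD j []) := by
      intro p hp'
      rw [Finset.mem_image] at hp'
      obtain ⟨d, hd, rfl⟩ := hp'
      exact hmaps j hj d hd
    have hFcard : (((Ws ∪ Xs ∪ Ys).filter (fun d => gainedP V Wf c d j)).image
        (fun d => (c, d))).card = Dd (V.getD j []) (Wf.getD j []) := by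
      rw [Finset.card_image_of_injOn (fun d1 _ d2 _ h => congrArg Prod.snd h)]
      exact hDeq j (Finset.mem_range.2 hj)
    have hFeq := Finset.eq_of_subset_of_card_le hFsub (by rw [hFcard]; exact Nat.le_of_eq rfl)
    rw [← hFeq] at hp
    rw [Finset.mem_image] at hp
    obtain ⟨d, hd, rfl⟩ := hp
    rw [Finset.mem_filter] at hd
    exact ⟨d, hd.1, hd.2, rfl⟩
  -- KEY STRUCTURAL LEMMA: every y-candidate is gained in a triple voter
  -- containing it, together with that triple's w and x coordinates
  have hkey : ∀ d ∈ Ys, ∃ j, ∃ hj : j < M.length,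
      (M.get ⟨j, hj⟩).2.2 = d ∧ gainedP V Wf c (M.get ⟨j, hj⟩).1 j ∧
      gainedP V Wf c (M.get ⟨j, hj⟩).2.1 j ∧ gainedP V Wf c d j := by
    intro d hd
    have hdU : d ∈ Ws ∪ Xs ∪ Ys := hYsub hd
    have hcard := hGone d hdU
    have hne : (GainedS V Wf c d).Nonempty := by
      rw [← Finset.card_pos, hcard]; omega
    obtain ⟨j, hjmem⟩ := hne
    have hjn : j < V.length := by
      have := (Finset.mem_filter.1 hjmem).1
      simpa using this
    have hgd : gainedP V Wf c d j := (Finset.mem_filter.1 hjmem).2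
    have hjm : j < M.length := by
      by_contra hge
      push_neg at hge
      obtain ⟨R, hRspec, hform⟩ := hTopV j hge hjn
      have hdR : d ∈ R := (hRspec d).2 ⟨hUC hdU, hWXYc d hdU⟩
      have hcR : c ∉ R := fun hc' => ((hRspec c).1 hc').2 rfl
      apply hgd.1
      rw [hform, List.idxOf_append_of_mem hdR, List.idxOf_append_of_notMem hcR]
      have := List.idxOf_lt_length_iff.2 hdR
      simp only [List.idxOf_cons_self, Nat.add_zero]
      omega
    obtain ⟨σ, τ, R, hστ, hRspec, hform⟩ := hTV j hjm
    have hw : (M.get ⟨j, hjm⟩).1 ∈ Ws := (hMst _ (List.get_mem M ⟨j, hjm⟩)).1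
    have hx : (M.get ⟨j, hjm⟩).2.1 ∈ Xs := (hMst _ (List.get_mem M ⟨j, hjm⟩)).2.1
    have hy : (M.get ⟨j, hjm⟩).2.2 ∈ Ys := (hMst _ (List.get_mem M ⟨j, hjm⟩)).2.2
    have hwU : (M.get ⟨j, hjm⟩).1 ∈ Ws ∪ Xs ∪ Ys := hWsub hw
    have hxU : (M.get ⟨j, hjm⟩).2.1 ∈ Ws ∪ Xs ∪ Ys := hXsub hx
    have hyU : (M.get ⟨j, hjm⟩).2.2 ∈ Ws ∪ Xs ∪ Ys := hYsub hy
    have hσ : σ = s ∨ σ = t := by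
      rcases hστ with ⟨h1, _⟩ | ⟨h1, _⟩
      · exact Or.inl h1
      · exact Or.inr h1
    have hτ : τ = s ∨ τ = t := by
      rcases hστ with ⟨_, h2⟩ | ⟨_, h2⟩
      · exact Or.inr h2
      · exact Or.inl h2
    have hστne : ∀ e ∈ Ws ∪ Xs ∪ Ys, e ≠ σ ∧ e ≠ τ := by
      intro e he
      constructor
      · rcases hσ with h | h <;> rw [h]
        · exact hWXYs e he
        · exact hWXYt e he
      · rcases hτ with h | h <;> rw [h]
        · exact hWXYs e he
        · exact hWXYt e he
    have hσc : σ ≠ c := by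
      rcases hσ with h | h <;> rw [h]
      · exact Ne.symm hcs
      · exact Ne.symm hct
    have hτc : c ≠ τ := by
      rcases hτ with h | h <;> rw [h]
      · exact hcs
      · exact hct
    have hστ2 : σ ≠ τ := by
      rcases hστ with ⟨h1, h2⟩ | ⟨h1, h2⟩ <;> rw [h1, h2]
      · exact hst
      · exact Ne.symm hst
    have hcw' : c ≠ (M.get ⟨j, hjm⟩).1 := Ne.symm (hWXYc _ hwU)
    have hcx' : c ≠ (M.get ⟨j, hjm⟩).2.1 := Ne.symm (hWXYc _ hxU)
    have hcy' : c ≠ (M.get ⟨j, hjm⟩).2.2 := Ne.symm (hWXYc _ hyU)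
    have hσw : σ ≠ (M.get ⟨j, hjm⟩).1 := Ne.symm (hστne _ hwU).1
    have hσx : σ ≠ (M.get ⟨j, hjm⟩).2.1 := Ne.symm (hστne _ hxU).1
    have hσy : σ ≠ (M.get ⟨j, hjm⟩).2.2 := Ne.symm (hστne _ hyU).1
    have hwτ : (M.get ⟨j, hjm⟩).1 ≠ τ := (hστne _ hwU).2
    have hxτ : (M.get ⟨j, hjm⟩).2.1 ≠ τ := (hστne _ hxU).2
    have hyτ : (M.get ⟨j, hjm⟩).2.2 ≠ τ := (hστne _ hyU).2
    have hwx : (M.get ⟨j, hjm⟩).1 ≠ (M.get ⟨j, hjm⟩).2.1 :=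
      fun he => Finset.disjoint_left.1 hWX (he ▸ hw) hx
    have hwy : (M.get ⟨j, hjm⟩).1 ≠ (M.get ⟨j, hjm⟩).2.2 :=
      fun he => Finset.disjoint_left.1 hWY (he ▸ hw) hy
    have hxy : (M.get ⟨j, hjm⟩).2.1 ≠ (M.get ⟨j, hjm⟩).2.2 :=
      fun he => Finset.disjoint_left.1 hXY (he ▸ hx) hy
    -- indexOf values in the initial voter
    have hidxc : (V.getD j []).idxOf c = 1 := by
      rw [hform, List.idxOf_cons_ne _ hσc, List.idxOf_cons_self]
    have hidxw : (V.getD j []).idxOf (M.get ⟨j, hjm⟩).1 = 2 := by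
      rw [hform, List.idxOf_cons_ne _ hσw, List.idxOf_cons_ne _ hcw',
        List.idxOf_cons_self]
    have hidxx : (V.getD j []).idxOf (M.get ⟨j, hjm⟩).2.1 = 3 := by
      rw [hform, List.idxOf_cons_ne _ hσx, List.idxOf_cons_ne _ hcx',
        List.idxOf_cons_ne _ hwx, List.idxOf_cons_self]
    have hidxy : (V.getD j []).idxOf (M.get ⟨j, hjm⟩).2.2 = 4 := by
      rw [hform, List.idxOf_cons_ne _ hσy, List.idxOf_cons_ne _ hcy',
        List.idxOf_cons_ne _ hwy, List.idxOf_cons_ne _ hxy,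
        List.idxOf_cons_self]
    have hidxτ : (V.getD j []).idxOf τ = 5 := by
      rw [hform, List.idxOf_cons_ne _ hστ2, List.idxOf_cons_ne _ hτc,
        List.idxOf_cons_ne _ hwτ, List.idxOf_cons_ne _ hxτ,
        List.idxOf_cons_ne _ hyτ, List.idxOf_cons_self]
    -- memberships in the voter list
    have hmemc : c ∈ V.getD j [] := by rw [hform]; simp
    have hmemτ : τ ∈ V.getD j [] := by rw [hform]; simp
    have hmemw : (M.get ⟨j, hjm⟩).1 ∈ V.getD j [] := by rw [hform]; simp
    have hmemy : (M.get ⟨j, hjm⟩).2.2 ∈ V.getD j [] := by rw [hform]; simp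
    -- STEP A : d is the y-coordinate of the triple
    have hdy : (M.get ⟨j, hjm⟩).2.2 = d := by
      by_contra hdy
      have hdR : d ∈ R := by
        apply (hRspec d).2
        refine ⟨hUC hdU, ?_⟩
        simp only [Finset.mem_insert, Finset.mem_singleton, not_or]
        exact ⟨hWXYs d hdU, hWXYc d hdU,
          fun he => Finset.disjoint_left.1 hWY (he ▸ hw) hd,
          fun he => Finset.disjoint_left.1 hXY (he ▸ hx) hd,
          fun he => hdy he.symm, hWXYt d hdU⟩
      have hd6 : 6 ≤ (V.getD j []).idxOf d := by
        have hne6 := ((hRspec d).1 hdR).2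
        simp only [Finset.mem_insert, Finset.mem_singleton, not_or] at hne6
        obtain ⟨h1, h2, h3, h4, h5, h6⟩ := hne6
        have hdσ : σ ≠ d := by
          rcases hσ with h | h <;> rw [h]
          · exact fun he => h1 he.symm
          · exact fun he => h6 he.symm
        have hdτ : τ ≠ d := by
          rcases hτ with h | h <;> rw [h]
          · exact fun he => h1 he.symm
          · exact fun he => h6 he.symm
        rw [hform, List.idxOf_cons_ne _ hdσ, List.idxOf_cons_ne _ (fun he => h2 he.symm),
          List.idxOf_cons_ne _ (fun he => h3 he.symm),
          List.idxOf_cons_ne _ (fun he => h4 he.symm),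
          List.idxOf_cons_ne _ (fun he => h5 he.symm),
          List.idxOf_cons_ne _ hdτ]
        omega
      have hfd : (Wf.getD j []).idxOf d < (Wf.getD j []).idxOf c := hgd.2
      rcases lt_or_ge ((Wf.getD j []).idxOf τ) ((Wf.getD j []).idxOf c) with hcτ | hcτ
      · -- the pair (c, τ) would be discordant
        have hpmem : (c, τ) ∈ Disc (V.getD j []) (Wf.getD j []) := by
          simp only [Disc, Finset.mem_filter, Finset.mem_product, List.mem_toFinset]
          refine ⟨⟨hmemc, hmemτ⟩, ?_, hcτ⟩
          rw [hidxc, hidxτ]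
          omega
        obtain ⟨d', hd'U, _, hpe⟩ := hsurj j hjn (c, τ) hpmem
        have : τ ∈ Ws ∪ Xs ∪ Ys := by
          rw [show τ = d' from congrArg Prod.snd hpe]
          exact hd'U
        rcases hτ with h | h <;> rw [h] at this
        · exact hsU this
        · exact htU this
      · -- the pair (τ, d) would be discordant
        have hpmem : (τ, d) ∈ Disc (V.getD j []) (Wf.getD j []) := by
          simp only [Disc, Finset.mem_filter, Finset.mem_product, List.mem_toFinset]
          refine ⟨⟨hmemτ, hmemV j hjn d (hUC hdU)⟩, ?_, lt_of_lt_of_le hfd hcτ⟩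
          rw [hidxτ]
          omega
        obtain ⟨d', _, _, hpe⟩ := hsurj j hjn (τ, d) hpmem
        have hτc' : τ = c := congrArg Prod.fst hpe
        rcases hτ with h | h <;> rw [h] at hτc'
        · exact hcs hτc'.symm
        · exact hct hτc'.symm
    -- STEP B : the w and x coordinates are gained in this voter as well
    have hgain2 : ∀ e, e ∈ Ws ∪ Xs ∪ Ys → c ≠ e →
        (V.getD j []).idxOf c < (V.getD j []).idxOf e →
        (V.getD j []).idxOf e < (V.getD j []).idxOf (M.get ⟨j, hjm⟩).2.2 →
        e ∈ V.getD j [] → gainedP V Wf c e j := by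
      intro e heU hce hue1 hue2 hmeme
      rcases lt_or_ge ((Wf.getD j []).idxOf e) ((Wf.getD j []).idxOf c) with hfe | hfe
      · -- (c, e) discordant, so e is gained here
        have hpmem : (c, e) ∈ Disc (V.getD j []) (Wf.getD j []) := by
          simp only [Disc, Finset.mem_filter, Finset.mem_product, List.mem_toFinset]
          exact ⟨⟨hmemc, hmeme⟩, hue1, hfe⟩
        obtain ⟨d', _, hg', hpe⟩ := hsurj j hjn (c, e) hpmem
        rw [show e = d' from congrArg Prod.snd hpe]
        exact hg'
      · -- otherwise (e, y) would be discordant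
        exfalso
        have hfd : (Wf.getD j []).idxOf d < (Wf.getD j []).idxOf c := hgd.2
        have hpmem : (e, (M.get ⟨j, hjm⟩).2.2) ∈ Disc (V.getD j []) (Wf.getD j []) := by
          simp only [Disc, Finset.mem_filter, Finset.mem_product, List.mem_toFinset]
          refine ⟨⟨hmeme, hmemy⟩, hue2, ?_⟩
          rw [hdy]
          exact lt_of_lt_of_le hfd hfe
        obtain ⟨d', _, _, hpe⟩ := hsurj j hjn (e, (M.get ⟨j, hjm⟩).2.2) hpmem
        exact hce (congrArg Prod.fst hpe).symm
    have hgw : gainedP V Wf c (M.get ⟨j, hjm⟩).1 j := by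
      apply hgain2 _ hwU hcw' _ _ hmemw
      · rw [hidxc, hidxw]; omega
      · rw [hidxw, hidxy]; omega
    have hgx : gainedP V Wf c (M.get ⟨j, hjm⟩).2.1 j := by
      apply hgain2 _ hxU hcx' _ _ (by rw [hform]; simp)
      · rw [hidxc, hidxx]; omega
      · rw [hidxx, hidxy]; omega
    exact ⟨j, hjm, hdy, hgw, hgx, hgd⟩
  -- uniqueness of the gaining voter
  have huniq : ∀ e ∈ Ws ∪ Xs ∪ Ys, ∀ j1 j2, j1 < V.length → j2 < V.length →
      gainedP V Wf c e j1 → gainedP V Wf c e j2 → j1 = j2 := by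
    intro e he j1 j2 h1 h2 hg1 hg2
    have hc1 := hGone e he
    have m1 : j1 ∈ GainedS V Wf c e :=
      Finset.mem_filter.2 ⟨Finset.mem_range.2 h1, hg1⟩
    have m2 : j2 ∈ GainedS V Wf c e :=
      Finset.mem_filter.2 ⟨Finset.mem_range.2 h2, hg2⟩
    exact Finset.card_le_one.1 (le_of_eq hc1) j1 m1 j2 m2
  -- choose the voter for each y-candidate and build the matching
  have hkey' : ∀ d : {z // z ∈ Ys}, ∃ j, ∃ hj : j < M.length,
      (M.get ⟨j, hj⟩).2.2 = d.1 ∧ gainedP V Wf c (M.get ⟨j, hj⟩).1 j ∧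
      gainedP V Wf c (M.get ⟨j, hj⟩).2.1 j ∧ gainedP V Wf c d.1 j :=
    fun d => hkey d.1 d.2
  choose jf hjf hy2 hgw2 hgx2 hgy2 using hkey'
  have hjlt : ∀ d, jf d < V.length := by
    intro d
    have := hjf d
    omega
  refine ⟨Ys.attach.image (fun d => M.get ⟨jf d, hjf d⟩), ?_, ?_, ?_⟩
  · intro mm hmm
    rw [Finset.mem_image] at hmm
    obtain ⟨d, _, rfl⟩ := hmm
    exact List.get_mem M _
  · rw [Finset.card_image_of_injOn, Finset.card_attach]
    · exact hcY.symm
    · intro d1 _ d2 _ h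
      have h' : M.get ⟨jf d1, hjf d1⟩ = M.get ⟨jf d2, hjf d2⟩ := h
      have h1 := hy2 d1
      have h2 := hy2 d2
      rw [h'] at h1
      exact Subtype.ext (by rw [← h1, h2])
  · intro m1 hm1 m2 hm2 hne12
    rw [Finset.mem_image] at hm1 hm2
    obtain ⟨d1, _, he1⟩ := hm1
    obtain ⟨d2, _, he2⟩ := hm2
    have he1' : M.get ⟨jf d1, hjf d1⟩ = m1 := he1
    have he2' : M.get ⟨jf d2, hjf d2⟩ = m2 := he2
    subst he1'
    subst he2' 
    have hjne : jf d1 ≠ jf d2 := by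
      intro h
      exact hne12 (congrArg M.get (Fin.ext h))
    refine ⟨?_, ?_, ?_⟩
    · intro he
      have hw2 : (M.get ⟨jf d2, hjf d2⟩).1 ∈ Ws :=
        (hMst _ (List.get_mem M _)).1
      have g1 := hgw2 d1
      have g2 := hgw2 d2
      rw [he] at g1
      exact hjne (huniq _ (hWsub hw2) _ _ (hjlt d1) (hjlt d2) g1 g2)
    · intro he
      have hx2 : (M.get ⟨jf d2, hjf d2⟩).2.1 ∈ Xs :=
        (hMst _ (List.get_mem M _)).2.1
      have g1 := hgx2 d1
      have g2 := hgx2 d2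
      rw [he] at g1
      exact hjne (huniq _ (hXsub hx2) _ _ (hjlt d1) (hjlt d2) g1 g2)
    · intro he
      have h1 := hy2 d1
      have h2 := hy2 d2
      have hd12 : d1 = d2 := Subtype.ext (by rw [← h1, ← h2, he])
      exact hne12 (by rw [hd12])
end
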